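/- arXiv:0809.1701 — 6 statements merged into one kernel-verified Lean document; each statement's English description precedes it below -/
import Mathlib

section
/- Let n ≥ 1 and let s < ⌈2^n/(n+1)⌉ be a natural number. In the n-fold tensor power ⨂_{i∈Fin n} ℂ², the closure (in the canonical topology of this finite-dimensional complex vector space) of the set of all tensors expressible as a sum of s decomposable tensors is a proper subset of the whole space; hence a generic tensor of format 2×⋯×2 (n times) cannot be written as a sum of fewer than ⌈2^n/(n+1)⌉ decomposable tensors. -/
open scoped TensorProduct

open MvPolynomial in

set_option maxHeartbeats 1000000 in
theorem my_exists_annihilator {ι σ : Type*} [Fintype ι] [Fintype σ]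
    (F : ι → MvPolynomial σ ℂ) (m : ℕ)
    (hdeg : ∀ g, (F g).totalDegree ≤ m)
    (hcard : Fintype.card σ < Fintype.card ι) :
    ∃ P : MvPolynomial ι ℂ, P ≠ 0 ∧ aeval F P = 0 := by
  classical
  by_contra hcon
  push_neg at hcon
  have halg : AlgebraicIndependent ℂ F := by
    rw [algebraicIndependent_iff]
    intro p hp
    by_contra hp0
    exact (hcon p hp0) hp
  have hinj : Function.Injective (aeval F : MvPolynomial ι ℂ →ₐ[ℂ] MvPolynomial σ ℂ) :=
    algebraicIndependent_iff_injective_aeval.mp halg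
  set N := Fintype.card ι with hN
  set d := Fintype.card σ with hd
  set D := (N * m + 1) ^ d with hD
  set E := D * N * m with hE
  -- the linearly independent family
  let idx : (ι → Fin (D + 1)) → (ι →₀ ℕ) := fun f =>
    Finsupp.equivFunOnFinite.symm (fun i => (f i : ℕ))
  have hidx : Function.Injective idx := by
    intro f g h
    funext i
    have := congrArg (fun (e : ι →₀ ℕ) => e i) h
    simpa [idx] using Fin.val_injective this
  let v : (ι → Fin (D + 1)) → MvPolynomial σ ℂ := fun f =>
    (aeval F).toLinearMap ((fun e => (monomial e (1:ℂ))) (idx f))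
  have hli : LinearIndependent ℂ v := by
    have h0 : LinearIndependent ℂ (fun e : ι →₀ ℕ => (monomial e 1 : MvPolynomial ι ℂ)) := by
      have := (basisMonomials ι ℂ).linearIndependent
      rwa [coe_basisMonomials] at this
    have h1 := h0.comp idx hidx
    exact h1.map' (aeval F).toLinearMap (LinearMap.ker_eq_bot.mpr hinj)
  -- degree bound on v f
  have hdegv : ∀ f, (v f).totalDegree ≤ E := by
    intro f
    have hv : v f = ∏ a : ι, F a ^ (idx f) a := by
      show aeval F (monomial (idx f) 1) = _
      rw [aeval_monomial, map_one, one_mul, Finsupp.prod_fintype]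
      intro i; exact pow_zero _
    rw [hv]
    refine le_trans (totalDegree_finset_prod _ _) ?_
    calc ∑ i : ι, (F i ^ (idx f) i).totalDegree
        ≤ ∑ _i : ι, D * m := by
          refine Finset.sum_le_sum fun i _ => ?_
          refine le_trans (totalDegree_pow _ _) ?_
          have hle : (idx f) i ≤ D := by
            simp only [idx, Finsupp.coe_equivFunOnFinite_symm]
            exact Nat.lt_succ_iff.mp (f i).isLt
          exact Nat.mul_le_mul (hle) (hdeg i)
      _ = N * (D * m) := by rw [Finset.sum_const, Finset.card_univ, smul_eq_mul]
      _ = E := by ring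
  -- the spanning finset
  let w : Finset (MvPolynomial σ ℂ) :=
    Finset.univ.image fun f : σ → Fin (E + 1) =>
      (monomial (Finsupp.equivFunOnFinite.symm fun x => (f x : ℕ)) 1 : MvPolynomial σ ℂ)
  have hspan : Set.range v ≤ (Submodule.span ℂ (w : Set (MvPolynomial σ ℂ)) : Set (MvPolynomial σ ℂ)) := by
    rintro _ ⟨f, rfl⟩
    show v f ∈ Submodule.span ℂ (w : Set (MvPolynomial σ ℂ))
    rw [(v f).as_sum]
    refine Submodule.sum_mem _ fun e he => ?_
    have hcoef : (monomial e ((v f).coeff e) : MvPolynomial σ ℂ)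
        = (v f).coeff e • monomial e 1 := by
      rw [smul_monomial, smul_eq_mul, mul_one]
    rw [hcoef]
    refine Submodule.smul_mem _ _ (Submodule.subset_span ?_)
    have hbound : ∀ x, e x ≤ E := by
      intro x
      have h1 : e x ≤ e.sum fun _ k => k := by
        rcases Nat.eq_zero_or_pos (e x) with h | h
        · simp [h]
        · exact Finset.single_le_sum (fun _ _ => Nat.zero_le _)
            (Finsupp.mem_support_iff.mpr h.ne')
      exact le_trans h1 (le_trans (le_totalDegree he) (hdegv f))
    simp only [w, Finset.coe_image, Finset.coe_univ, Set.image_univ, Set.mem_range]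
    refine ⟨fun x => ⟨e x, Nat.lt_succ_of_le (hbound x)⟩, ?_⟩
    congr 1
    ext x
    simp
  have hcard2 : (D + 1) ^ N ≤ (E + 1) ^ d := by
    have hfin : Fintype.card (ι → Fin (D + 1)) = (D + 1) ^ N := by
      simp [hN]
    have hls := linearIndependent_le_span' v hli (w : Set (MvPolynomial σ ℂ)) hspan
    rw [Cardinal.mk_fintype, hfin] at hls
    simp only [Finset.coe_sort_coe, Fintype.card_coe] at hls
    have hls' : (D + 1) ^ N ≤ w.card := by exact_mod_cast hls
    refine le_trans hls' ?_
    refine le_trans Finset.card_image_le ?_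
    simp [hd]
  -- arithmetic contradiction
  have harith : (E + 1) ^ d < (D + 1) ^ N := by
    have h1 : E + 1 ≤ (D + 1) * (N * m + 1) := by
      simp only [hE]; nlinarith
    calc (E + 1) ^ d ≤ ((D + 1) * (N * m + 1)) ^ d := Nat.pow_le_pow_left h1 d
      _ = (D + 1) ^ d * D := by rw [mul_pow, hD]
      _ < (D + 1) ^ d * (D + 1) := by
          have hpos : (0:ℕ) < (D + 1) ^ d := pow_pos (Nat.succ_pos D) d
          nlinarith
      _ = (D + 1) ^ (d + 1) := by rw [pow_succ]
      _ ≤ (D + 1) ^ N := Nat.pow_le_pow_right (Nat.le_add_left _ _) hcard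
  omega

open MvPolynomial in
set_option maxHeartbeats 1000000 in
/-- A generic 2 × ⋯ × 2 tensor (n times) is NOT the sum of fewer than
⌈2^n/(n+1)⌉ decomposable tensors: for `s < ⌈2^n/(n+1)⌉` the closure of the set
of sums of `s` decomposable tensors, in the canonical topology of the
finite-dimensional complex vector space `⨂[ℂ] i : Fin n, (Fin 2 → ℂ)`,
is a proper subset of the whole space. -/
theorem stmt4 (n : ℕ) (hn : 1 ≤ n) (s : ℕ)
    (hs : (s : ℤ) < ⌈(2 ^ n : ℚ) / (n + 1)⌉) :
    letI : TopologicalSpace (⨂[ℂ] _i : Fin n, (Fin 2 → ℂ)) :=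
      moduleTopology ℂ _
    closure {T : ⨂[ℂ] _i : Fin n, (Fin 2 → ℂ) |
        ∃ v : Fin s → Fin n → (Fin 2 → ℂ),
          T = ∑ i, PiTensorProduct.tprod ℂ (fun j => v i j)}
      ≠ Set.univ := by
  classical
  letI : TopologicalSpace (⨂[ℂ] _i : Fin n, (Fin 2 → ℂ)) := moduleTopology ℂ _
  haveI : IsModuleTopology ℂ (⨂[ℂ] _i : Fin n, (Fin 2 → ℂ)) := ⟨rfl⟩
  -- coordinate functionals
  let φ : (Fin n → Fin 2) → ((⨂[ℂ] _i : Fin n, (Fin 2 → ℂ)) →ₗ[ℂ] ℂ) := fun g =>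
    PiTensorProduct.lift ((MultilinearMap.mkPiAlgebra ℂ (Fin n) ℂ).compLinearMap
      (fun j => LinearMap.proj (g j)))
  have hφ : ∀ (g : Fin n → Fin 2) (v : (i : Fin n) → (Fin 2 → ℂ)),
      φ g (PiTensorProduct.tprod ℂ v) = ∏ j, v j (g j) := by
    intro g v
    simp only [φ, PiTensorProduct.lift.tprod, MultilinearMap.compLinearMap_apply,
      MultilinearMap.mkPiAlgebra_apply, LinearMap.proj_apply]
  let coords : (⨂[ℂ] _i : Fin n, (Fin 2 → ℂ)) →ₗ[ℂ] ((Fin n → Fin 2) → ℂ) := LinearMap.pi φ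
  have hcont : Continuous coords := IsModuleTopology.continuous_of_linearMap coords
  -- arithmetic
  have hlt : s * (n + 1) < 2 ^ n := by
    have h1 : (s : ℚ) < (2 ^ n : ℚ) / (n + 1) := by exact_mod_cast Int.lt_ceil.mp hs
    have h2 : (0 : ℚ) < (n : ℚ) + 1 := by positivity
    have h3 : (s : ℚ) * ((n : ℚ) + 1) < 2 ^ n := by
      rw [div_eq_mul_inv] at h1
      calc (s : ℚ) * ((n:ℚ)+1) < (2 ^ n / ((n:ℚ)+1)) * ((n:ℚ)+1) := by
            exact mul_lt_mul_of_pos_right h1 h2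
        _ = 2 ^ n := div_mul_cancel₀ _ h2.ne'
    exact_mod_cast h3
  -- annihilating polynomial
  let F : (Fin n → Fin 2) → MvPolynomial (Fin s × Option (Fin n)) ℂ := fun g =>
    ∑ i : Fin s, X (i, none) * ∏ j : Fin n, if g j = 0 then 1 else X (i, some j)
  have hdeg : ∀ g, (F g).totalDegree ≤ n + 1 := by
    intro g
    refine le_trans (totalDegree_finset_sum _ _) (Finset.sup_le fun i _ => ?_)
    refine le_trans (totalDegree_mul _ _) ?_
    have h1 : (X (R := ℂ) (i, (none : Option (Fin n)))).totalDegree = 1 := totalDegree_X _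
    have h2 : (∏ j : Fin n, if g j = 0 then 1 else
        X (R := ℂ) (i, (some j : Option (Fin n)))).totalDegree ≤ n := by
      refine le_trans (totalDegree_finset_prod _ _) ?_
      calc ∑ j : Fin n, (if g j = 0 then 1 else
            X (R := ℂ) (i, (some j : Option (Fin n)))).totalDegree
          ≤ ∑ _j : Fin n, 1 := by
            refine Finset.sum_le_sum fun j _ => ?_
            split_ifs
            · simp [totalDegree_one]
            · simp [totalDegree_X]
        _ = n := by simp
    omega
  obtain ⟨P, hP0, hPF⟩ := my_exists_annihilator F (n + 1) hdeg (by
    simp only [Fintype.card_prod, Fintype.card_fin, Fintype.card_option, Fintype.card_fun]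
    exact hlt)
  -- the vanishing statement on S
  have hvanish : ∀ T ∈ {T : (⨂[ℂ] _i : Fin n, (Fin 2 → ℂ)) | ∃ v : Fin s → Fin n → (Fin 2 → ℂ),
      T = ∑ i, PiTensorProduct.tprod ℂ (fun j => v i j)},
      MvPolynomial.eval (coords T) P = 0 := by
    rintro T ⟨v, rfl⟩
    have hcT : coords (∑ i, PiTensorProduct.tprod ℂ (fun j => v i j))
        = fun g => ∑ i, ∏ j, v i j (g j) := by
      funext g
      show φ g (∑ i, PiTensorProduct.tprod ℂ (fun j => v i j)) = _
      rw [map_sum]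
      exact Finset.sum_congr rfl fun i _ => hφ g _
    let y : ℂ → (Fin n → Fin 2) → ℂ := fun t g =>
      ∑ i, ∏ j, (v i j (g j) + if g j = 0 then t else 0)
    have hy0 : y 0 = coords (∑ i, PiTensorProduct.tprod ℂ (fun j => v i j)) := by
      rw [hcT]; funext g; simp [y]
    have hycont : Continuous y := by
      refine continuous_pi fun g => ?_
      refine continuous_finset_sum _ fun i _ => ?_
      refine continuous_finset_prod _ fun j _ => ?_
      by_cases h : g j = 0
      · simpa [h] using continuous_const_add (v i j 0)
      · simpa [h] using continuous_const
    set Good : Set ℂ := {t | ∀ i j, v i j 0 + t ≠ 0} with hGood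
    have hGd : Dense Good := by
      have hcount : (⋃ (i : Fin s), ⋃ (j : Fin n), {-(v i j 0)} : Set ℂ).Countable :=
        Set.countable_iUnion fun i => Set.countable_iUnion fun j => Set.countable_singleton _
      refine (hcount.dense_compl ℂ).mono ?_
      intro t ht
      simp only [Set.mem_compl_iff, Set.mem_iUnion, Set.mem_singleton_iff, not_exists] at ht
      intro i j h0
      exact ht i j (eq_neg_of_add_eq_zero_right h0)
    have hzero : ∀ t ∈ Good, MvPolynomial.eval (y t) P = 0 := by
      intro t ht
      set a : Fin s → Fin n → ℂ := fun i j => v i j 0 + t with ha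
      let params : Fin s × Option (Fin n) → ℂ := fun p =>
        Option.rec (∏ j, a p.1 j) (fun j => v p.1 j 1 / a p.1 j) p.2
      have hyt : y t = fun g => MvPolynomial.eval params (F g) := by
        funext g
        show ∑ i, ∏ j, (v i j (g j) + if g j = 0 then t else 0) = _
        rw [map_sum]
        refine Finset.sum_congr rfl fun i _ => ?_
        rw [eval_mul, eval_X, map_prod]
        show ∏ j, (v i j (g j) + if g j = 0 then t else 0)
            = (∏ j, a i j) * ∏ j, MvPolynomial.eval params (if g j = 0 then 1 else X (i, some j))
        rw [← Finset.prod_mul_distrib]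
        refine Finset.prod_congr rfl fun j _ => ?_
        by_cases h : g j = 0
        · rw [if_pos h, if_pos h, map_one, mul_one, h, ha]
        · have h1 : g j = 1 := Fin.eq_one_of_ne_zero _ h
          have hne : a i j ≠ 0 := ht i j
          rw [if_neg h, if_neg h, eval_X, h1]
          show v i j 1 + 0 = a i j * (v i j 1 / a i j)
          rw [add_zero, mul_div_cancel₀ _ hne]
      have hkey : MvPolynomial.eval (y t) P = MvPolynomial.eval params (aeval F P) := by
        rw [hyt]
        have h1 : (aeval params) (aeval F P)
            = aeval (fun g => (aeval params) (F g)) P := comp_aeval_apply _ _ _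
        have h2 : ∀ {τ : Type} (x : τ → ℂ) (q : MvPolynomial τ ℂ),
            MvPolynomial.eval x q = aeval x q := fun x q =>
          (DFunLike.congr_fun (coe_aeval_eq_eval x) q).symm
        rw [h2 params, h1, h2 (fun g => (eval params) (F g)) P]
        simp only [h2 params]
      rw [hkey, hPF, map_zero]
    have hne : (nhdsWithin (0:ℂ) Good).NeBot :=
      mem_closure_iff_nhdsWithin_neBot.mp (hGd 0)
    have h1 : Filter.Tendsto (fun t => MvPolynomial.eval (y t) P) (nhdsWithin 0 Good)
        (nhds (MvPolynomial.eval (coords (∑ i, PiTensorProduct.tprod ℂ fun j => v i j)) P)) := by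
      have hc : Continuous fun t => MvPolynomial.eval (y t) P :=
        (MvPolynomial.continuous_eval P).comp hycont
      have htd := hc.tendsto 0
      rw [show y 0 = coords (∑ i, PiTensorProduct.tprod ℂ fun j => v i j) from hy0] at htd
      exact htd.mono_left nhdsWithin_le_nhds
    have h2 : Filter.Tendsto (fun t => MvPolynomial.eval (y t) P) (nhdsWithin 0 Good)
        (nhds 0) := by
      refine Filter.Tendsto.congr' ?_ tendsto_const_nhds
      filter_upwards [self_mem_nhdsWithin] with t ht
      exact (hzero t ht).symm
    exact tendsto_nhds_unique h1 h2
  -- conclusion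
  intro hcl
  obtain ⟨y₀, hy₀⟩ : ∃ y₀ : (Fin n → Fin 2) → ℂ, MvPolynomial.eval y₀ P ≠ 0 := by
    by_contra hy
    push_neg at hy
    exact hP0 (MvPolynomial.funext fun x => by rw [hy x, map_zero])
  let T₀ : (⨂[ℂ] _i : Fin n, (Fin 2 → ℂ)) := ∑ g : Fin n → Fin 2,
    y₀ g • PiTensorProduct.tprod ℂ (fun j => Pi.single (g j) (1:ℂ))
  have hT₀ : coords T₀ = y₀ := by
    funext g'
    show φ g' T₀ = y₀ g'
    rw [map_sum]
    have hterm : ∀ g : Fin n → Fin 2,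
        φ g' (y₀ g • PiTensorProduct.tprod ℂ (fun j => Pi.single (g j) (1:ℂ)))
        = if g = g' then y₀ g else 0 := by
      intro g
      rw [map_smul, hφ]
      by_cases hgg : g = g'
      · subst hgg
        simp [Pi.single_apply]
      · have : ∃ j, g' j ≠ g j := by
          by_contra hc
          push_neg at hc
          exact hgg (funext fun j => (hc j).symm)
        obtain ⟨j, hj⟩ := this
        rw [Finset.prod_eq_zero (Finset.mem_univ j)]
        · simp [hgg]
        · simp [Pi.single_apply, hj]
    rw [Finset.sum_congr rfl fun g _ => hterm g]
    simp
  have hmem : T₀ ∈ closure {T : (⨂[ℂ] _i : Fin n, (Fin 2 → ℂ)) | ∃ v : Fin s → Fin n → (Fin 2 → ℂ),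
      T = ∑ i, PiTensorProduct.tprod ℂ (fun j => v i j)} := by
    rw [hcl]; trivial
  have hsub : closure {T : (⨂[ℂ] _i : Fin n, (Fin 2 → ℂ)) | ∃ v : Fin s → Fin n → (Fin 2 → ℂ),
      T = ∑ i, PiTensorProduct.tprod ℂ (fun j => v i j)}
      ⊆ {T : (⨂[ℂ] _i : Fin n, (Fin 2 → ℂ)) | MvPolynomial.eval (coords T) P = 0} := by
    refine closure_minimal hvanish ?_
    exact (isClosed_singleton (x := (0:ℂ))).preimage
      ((MvPolynomial.continuous_eval P).comp hcont)
  have := hsub hmem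
  rw [Set.mem_setOf_eq, hT₀] at this
  exact hy₀ this
end

section
/- Let n ≥ 2 and m > n be natural numbers, and let Q_1,…,Q_{n+1} ∈ ℂ^{n+1} be linearly independent vectors. If F is a form of degree m+1 in n+1 variables that vanishes to order ≥ m at each of the n+1 points [Q_j], then F = 0. -/
open MvPolynomial

/-- Composition of partial derivatives along a list of variable indices. -/
noncomputable def derivMap {N : ℕ} (l : List (Fin N)) :
    MvPolynomial (Fin N) ℂ →ₗ[ℂ] MvPolynomial (Fin N) ℂ :=
  l.foldr (fun i f => (pderiv i).toLinearMap.comp f) LinearMap.id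

/-- The subspace of polynomials vanishing to order ≥ k at the point `a`,
i.e. all iterated partial derivatives of total order ≤ k-1 vanish at `a`. -/
noncomputable def vanishingSubmodule {N : ℕ} (a : Fin N → ℂ) (k : ℕ) :
    Submodule ℂ (MvPolynomial (Fin N) ℂ) :=
  ⨅ (l : List (Fin N)) (_ : l.length < k),
    LinearMap.ker ((aeval a).toLinearMap.comp (derivMap l))

namespace Stmt5Aux

variable {N : ℕ}

lemma derivMap_nil (p : MvPolynomial (Fin N) ℂ) : derivMap [] p = p := rfl

lemma derivMap_cons (k : Fin N) (l : List (Fin N)) (p : MvPolynomial (Fin N) ℂ) :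
    derivMap (k :: l) p = pderiv k (derivMap l p) := rfl

lemma mem_vanishing_iff (a : Fin N → ℂ) (k : ℕ) (p : MvPolynomial (Fin N) ℂ) :
    p ∈ vanishingSubmodule a k ↔
      ∀ l : List (Fin N), l.length < k → aeval a (derivMap l p) = 0 := by
  simp [vanishingSubmodule, Submodule.mem_iInf, LinearMap.mem_ker]

/-! ### Coefficients of derivatives -/

lemma coeff_pderiv (γ : Fin N →₀ ℕ) (i : Fin N) (p : MvPolynomial (Fin N) ℂ) :
    coeff γ (pderiv i p) = ((γ i + 1 : ℕ) : ℂ) * coeff (γ + Finsupp.single i 1) p := by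
  induction p using MvPolynomial.induction_on' with
  | monomial s a =>
    rw [pderiv_monomial, coeff_monomial, coeff_monomial]
    by_cases h : s = γ + Finsupp.single i 1
    · subst h
      rw [if_pos, if_pos rfl]
      · push_cast [Finsupp.add_apply, Finsupp.single_apply]
        simp; ring
      · simp
    · rw [if_neg h]
      by_cases h2 : s - Finsupp.single i 1 = γ
      · rw [if_pos h2]
        have hs : s i = 0 := by
          by_contra hs
          apply h
          rw [← h2, tsub_add_cancel_of_le]
          exact Finsupp.single_le_iff.2 (Nat.one_le_iff_ne_zero.2 hs)
        simp [hs]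
      · rw [if_neg h2, mul_zero]
  | add p q hp hq => simp [hp, hq, mul_add]

/-- The exponent multi-index corresponding to a list of indices. -/
noncomputable def sumSingles (l : List (Fin N)) : Fin N →₀ ℕ :=
  (l.map fun i => Finsupp.single i 1).sum

lemma sumSingles_nil : sumSingles ([] : List (Fin N)) = 0 := rfl

lemma sumSingles_cons (k : Fin N) (l : List (Fin N)) :
    sumSingles (k :: l) = Finsupp.single k 1 + sumSingles l := by
  simp [sumSingles]

lemma sumSingles_append (l₁ l₂ : List (Fin N)) :
    sumSingles (l₁ ++ l₂) = sumSingles l₁ + sumSingles l₂ := by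
  simp [sumSingles]

lemma sumSingles_replicate (b : ℕ) (a : Fin N) :
    sumSingles (List.replicate b a) = Finsupp.single a b := by
  induction b with
  | zero => simp [sumSingles_nil]
  | succ b ih =>
    rw [List.replicate_succ, sumSingles_cons, ih, ← Finsupp.single_add]
    congr 1
    omega

lemma coeff_derivMap (l : List (Fin N)) (γ : Fin N →₀ ℕ) (p : MvPolynomial (Fin N) ℂ) :
    ∃ c : ℕ, c ≠ 0 ∧ coeff γ (derivMap l p) = (c : ℂ) * coeff (γ + sumSingles l) p := by
  induction l generalizing γ with
  | nil => exact ⟨1, one_ne_zero, by simp [derivMap_nil, sumSingles_nil]⟩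
  | cons k l ih =>
    obtain ⟨c, hc, hcd⟩ := ih (γ + Finsupp.single k 1)
    refine ⟨(γ k + 1) * c, by positivity, ?_⟩
    rw [derivMap_cons, coeff_pderiv, hcd, sumSingles_cons, ← add_assoc]
    push_cast
    ring

lemma degree_add (f g : Fin N →₀ ℕ) :
    (f + g).degree = f.degree + g.degree := by
  rw [Finsupp.degree_eq_weight_one]
  exact map_add _ _ _

lemma degree_single (a : Fin N) (b : ℕ) : (Finsupp.single a b).degree = b := by
  rcases eq_or_ne b 0 with rfl | hb
  · simp
  · exact Finsupp.degree_single a b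

lemma exists_list (β : Fin N →₀ ℕ) :
    ∃ l : List (Fin N), l.length = β.degree ∧ sumSingles l = β := by
  induction β using Finsupp.induction with
  | zero => exact ⟨[], by simp, rfl⟩
  | single_add a b f ha hb ih =>
    obtain ⟨l, hl, hs⟩ := ih
    refine ⟨List.replicate b a ++ l, ?_, ?_⟩
    · rw [List.length_append, List.length_replicate, hl, degree_add, degree_single]
    · rw [sumSingles_append, sumSingles_replicate, hs]

/-! ### Linear substitution -/

/-- Substitution `X i ↦ ∑ j, L i j • X j`. -/
noncomputable def subst (L : Matrix (Fin N) (Fin N) ℂ) :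
    MvPolynomial (Fin N) ℂ →ₐ[ℂ] MvPolynomial (Fin N) ℂ :=
  aeval (fun i => ∑ j, C (L i j) * X j)

lemma subst_X (L : Matrix (Fin N) (Fin N) ℂ) (i : Fin N) :
    subst L (X i) = ∑ j, C (L i j) * X j :=
  aeval_X _ _

lemma pderiv_subst (L : Matrix (Fin N) (Fin N) ℂ) (k : Fin N) (p : MvPolynomial (Fin N) ℂ) :
    pderiv k (subst L p) = ∑ i, L i k • subst L (pderiv i p) := by
  induction p using MvPolynomial.induction_on with
  | C a => simp [subst]
  | add p q hp hq =>
    simp only [map_add, hp, hq, smul_add, Finset.sum_add_distrib]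
  | mul_X p i hp =>
    have h1 : pderiv k (subst L (X i)) = C (L i k) := by
      rw [subst_X, map_sum]
      have h1' : ∀ j : Fin N, pderiv k (C (L i j) * X j) = if k = j then C (L i k) else 0 := by
        intro j
        rcases eq_or_ne j k with rfl | h
        · rw [pderiv_C_mul, pderiv_X_self, mul_one, if_pos rfl]
        · rw [pderiv_C_mul, pderiv_X_of_ne h, mul_zero, if_neg (Ne.symm h)]
      rw [Finset.sum_congr rfl fun j _ => h1' j, Finset.sum_ite_eq, if_pos (Finset.mem_univ k)]
    have hXi : ∀ i' : Fin N, subst L (pderiv i' (X i)) = if i = i' then 1 else 0 := by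
      intro i'
      rcases eq_or_ne i i' with rfl | h
      · rw [pderiv_X_self, if_pos rfl, map_one]
      · rw [pderiv_X_of_ne h, if_neg h, map_zero]
    calc pderiv k (subst L (p * X i))
        = pderiv k (subst L p) * subst L (X i) + subst L p * C (L i k) := by
          rw [map_mul, pderiv_mul, h1]
      _ = (∑ i', L i' k • subst L (pderiv i' p)) * subst L (X i)
            + ∑ i', L i' k • (subst L p * if i = i' then 1 else 0) := by
          rw [hp]
          congr 1
          have h2 : ∀ i' : Fin N, L i' k • (subst L p * if i = i' then 1 else 0)
              = if i = i' then L i k • subst L p else 0 := by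
            intro i'
            rcases eq_or_ne i i' with rfl | h
            · simp
            · simp [h]
          rw [Finset.sum_congr rfl fun i' _ => h2 i', Finset.sum_ite_eq,
            if_pos (Finset.mem_univ i), smul_eq_C_mul, mul_comm]
      _ = ∑ i', L i' k • subst L (pderiv i' (p * X i)) := by
          rw [Finset.sum_mul, ← Finset.sum_add_distrib]
          refine Finset.sum_congr rfl fun i' _ => ?_
          rw [pderiv_mul, map_add, map_mul, map_mul, hXi, smul_add, smul_mul_assoc]

lemma derivMap_subst_mem (L : Matrix (Fin N) (Fin N) ℂ) (l : List (Fin N))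
    (F : MvPolynomial (Fin N) ℂ) :
    derivMap l (subst L F) ∈ Submodule.span ℂ
      {g | ∃ l' : List (Fin N), l'.length = l.length ∧ g = subst L (derivMap l' F)} := by
  induction l with
  | nil => exact Submodule.subset_span ⟨[], rfl, rfl⟩
  | cons k l ih =>
    rw [derivMap_cons]
    refine Submodule.span_induction ?_ ?_ ?_ ?_ ih
    · rintro g ⟨l', hl, rfl⟩
      rw [pderiv_subst]
      refine Submodule.sum_mem _ fun i _ => Submodule.smul_mem _ _ ?_
      exact Submodule.subset_span ⟨i :: l', by simp [hl], by rw [derivMap_cons]⟩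
    · simp
    · intro x y _ _ hx hy
      rw [map_add]; exact add_mem hx hy
    · intro c x _ hx
      rw [(pderiv k).map_smul]; exact Submodule.smul_mem _ _ hx

lemma aeval_single_subst (L : Matrix (Fin N) (Fin N) ℂ) (j : Fin N)
    (p : MvPolynomial (Fin N) ℂ) :
    aeval (Pi.single j 1 : Fin N → ℂ) (subst L p) = aeval (fun i => L i j) p := by
  have hfun : (fun i => aeval (Pi.single j 1 : Fin N → ℂ) (∑ j', C (L i j') * X j'))
      = fun i => (L i j : ℂ) := by
    funext i
    simp [Pi.single_apply, mul_ite, Finset.sum_ite_eq']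
  rw [subst, ← AlgHom.comp_apply, comp_aeval, hfun]

lemma subst_subst (L M : Matrix (Fin N) (Fin N) ℂ) (hLM : L * M = 1)
    (p : MvPolynomial (Fin N) ℂ) : subst M (subst L p) = p := by
  have key : (subst M).comp (subst L) = AlgHom.id ℂ (MvPolynomial (Fin N) ℂ) := by
    apply MvPolynomial.algHom_ext
    intro i
    show subst M (subst L (X i)) = X i
    rw [subst_X, map_sum]
    have h1 : ∀ j, subst M (C (L i j) * X j) = ∑ k, C (L i j * M j k) * X k := by
      intro j
      rw [map_mul, subst_X, Finset.mul_sum]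
      refine Finset.sum_congr rfl fun k _ => ?_
      rw [show (subst M) (C (L i j)) = C (L i j) from by simp [subst], ← mul_assoc, ← C_mul]
    rw [Finset.sum_congr rfl fun j _ => h1 j, Finset.sum_comm]
    have h2 : ∀ k, ∑ j, C (L i j * M j k) * X k = C ((L * M) i k) * X k := by
      intro k
      rw [← Finset.sum_mul, ← map_sum, Matrix.mul_apply]
    rw [Finset.sum_congr rfl fun k _ => h2 k, hLM]
    simp [Matrix.one_apply, apply_ite (C : ℂ → MvPolynomial (Fin N) ℂ),
      ite_mul, Finset.sum_ite_eq]
  calc subst M (subst L p) = ((subst M).comp (subst L)) p := rfl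
    _ = p := by rw [key]; rfl

end Stmt5Aux

open Stmt5Aux in
theorem stmt5 (n m : ℕ) (hn : 2 ≤ n) (hm : n < m)
    (Q : Fin (n + 1) → (Fin (n + 1) → ℂ)) (hQ : LinearIndependent ℂ Q)
    (F : MvPolynomial (Fin (n + 1)) ℂ) (hF : F.IsHomogeneous (m + 1))
    (hvan : ∀ j, F ∈ vanishingSubmodule (Q j) m) :
    F = 0 := by
  classical
  -- the matrix whose columns are the Q j
  set L : Matrix (Fin (n + 1)) (Fin (n + 1)) ℂ := Matrix.of fun i j => Q j i with hL
  have hunit : IsUnit L := by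
    rw [← Matrix.linearIndependent_cols_iff_isUnit]
    have : (fun i => L.transpose i) = Q := by
      funext i; funext j; rfl
    rw [show L.col = Q from this]
    exact hQ
  set G : MvPolynomial (Fin (n + 1)) ℂ := subst L F with hGdef
  -- G is homogeneous of degree m+1
  have hG : G.IsHomogeneous (m + 1) := by
    rw [hGdef]
    have := hF.aeval (fun i => ∑ j, C (L i j) * X j)
      (fun i => IsHomogeneous.sum _ _ _ fun j _ => isHomogeneous_C_mul_X _ _)
    rw [one_mul] at this
    exact this
  -- G vanishes to order ≥ m at the coordinate points
  have hvanG : ∀ (j : Fin (n + 1)) (l : List (Fin (n + 1))), l.length < m →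
      aeval (Pi.single j 1 : Fin (n + 1) → ℂ) (derivMap l G) = 0 := by
    intro j l hl
    have hmem := derivMap_subst_mem L l F
    have hker : Submodule.span ℂ
        {g | ∃ l' : List (Fin (n + 1)), l'.length = l.length ∧ g = subst L (derivMap l' F)} ≤
        LinearMap.ker ((aeval (Pi.single j 1 : Fin (n + 1) → ℂ)).toLinearMap :
          MvPolynomial (Fin (n + 1)) ℂ →ₗ[ℂ] ℂ) := by
      rw [Submodule.span_le]
      rintro g ⟨l', hl', rfl⟩
      simp only [SetLike.mem_coe, LinearMap.mem_ker, AlgHom.toLinearMap_apply]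
      rw [aeval_single_subst]
      have hQj : (fun i => L i j) = Q j := by funext i; rfl
      rw [hQj]
      exact (mem_vanishing_iff (Q j) m F).1 (hvan j) l' (hl' ▸ hl)
    have := hker hmem
    simpa using this
  -- G = 0 via the coefficient argument
  have hG0 : G = 0 := by
    ext α
    rw [coeff_zero]
    by_cases hdeg : α.degree = m + 1
    swap
    · exact hG.coeff_eq_zero hdeg
    -- pigeonhole : some exponent is at least 2
    have hj : ∃ j : Fin (n + 1), 2 ≤ α j := by
      by_contra h
      push_neg at h
      have h1 : α.degree ≤ ∑ i : Fin (n + 1), α i :=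
        Finset.sum_le_sum_of_subset (Finset.subset_univ _)
      have h2 : ∑ i : Fin (n + 1), α i ≤ ∑ _i : Fin (n + 1), 1 :=
        Finset.sum_le_sum fun i _ => by have := h i; omega
      simp only [Finset.sum_const, Finset.card_univ, Fintype.card_fin, smul_eq_mul,
        mul_one] at h2
      omega
    obtain ⟨j, hj2⟩ := hj
    set β := α.erase j with hβ
    have hβα : Finsupp.single j (α j) + β = α := Finsupp.single_add_erase j α
    have hdegβ : β.degree + α j = m + 1 := by
      have h3 := degree_add (Finsupp.single j (α j)) β
      rw [hβα, hdeg, degree_single] at h3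
      omega
    obtain ⟨l, hlen, hsum⟩ := exists_list β
    have hlm : l.length < m := by rw [hlen]; omega
    have h0 := hvanG j l hlm
    set q := derivMap l G with hq
    set γ0 : Fin (n + 1) →₀ ℕ := Finsupp.single j (α j) with hγ0
    -- all coefficients of q at exponents supported on {j} other than γ0 vanish
    have hcoeffq : ∀ γ : Fin (n + 1) →₀ ℕ, (∀ i, i ≠ j → γ i = 0) → γ ≠ γ0 → coeff γ q = 0 := by
      intro γ hγ hne
      obtain ⟨c, hc, hcq⟩ := coeff_derivMap l γ G
      rw [hq, hcq, hsum]
      have hγs : γ = Finsupp.single j (γ j) := by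
        ext i
        rcases eq_or_ne i j with rfl | h
        · simp
        · simp [Finsupp.single_apply, Ne.symm h, hγ i h]
      have hdne : (γ + β).degree ≠ m + 1 := by
        rw [degree_add]
        rw [hγs, degree_single]
        intro hcon
        apply hne
        rw [hγs, hγ0]
        congr 1
        omega
      rw [hG.coeff_eq_zero hdne, mul_zero]
    -- evaluate at the coordinate point to get coeff γ0 q = 0
    have hq0 : coeff γ0 q = 0 := by
      by_cases hmem : γ0 ∈ q.support
      swap
      · exact notMem_support_iff.1 hmem
      rw [show (aeval (Pi.single j 1 : Fin (n + 1) → ℂ) q : ℂ)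
          = eval (Pi.single j 1 : Fin (n + 1) → ℂ) q from rfl, eval_eq'] at h0
      have hprodγ0 : (∏ i, (Pi.single j 1 : Fin (n + 1) → ℂ) i ^ γ0 i) = 1 := by
        refine Finset.prod_eq_one fun i _ => ?_
        rcases eq_or_ne i j with rfl | h
        · simp [hγ0]
        · simp [Pi.single_apply, h, hγ0, Finsupp.single_apply, Ne.symm h]
      have hsingle : ∑ d ∈ q.support, coeff d q
            * ∏ i, (Pi.single j 1 : Fin (n + 1) → ℂ) i ^ d i
          = coeff γ0 q * ∏ i, (Pi.single j 1 : Fin (n + 1) → ℂ) i ^ γ0 i := by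
        refine Finset.sum_eq_single_of_mem γ0 hmem fun d _ hdne => ?_
        by_cases hsupp : ∀ i, i ≠ j → d i = 0
        · rw [hcoeffq d hsupp hdne, zero_mul]
        · push_neg at hsupp
          obtain ⟨i, hij, hdi⟩ := hsupp
          have hz : (Pi.single j 1 : Fin (n + 1) → ℂ) i ^ d i = 0 := by
            rw [Pi.single_apply, if_neg hij]
            exact zero_pow hdi
          rw [Finset.prod_eq_zero (Finset.mem_univ i) hz, mul_zero]
      rw [hsingle, hprodγ0, mul_one] at h0
      exact h0
    -- conclude
    obtain ⟨c, hc, hcq⟩ := coeff_derivMap l γ0 G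
    rw [← hq, hq0] at hcq
    rw [hsum, hβα] at hcq
    rcases mul_eq_zero.1 hcq.symm with h | h
    · exact absurd h (by exact_mod_cast hc)
    · exact h
  -- transfer back : F = 0
  have hLM : L * L⁻¹ = 1 := Matrix.mul_nonsing_inv L ((Matrix.isUnit_iff_isUnit_det L).1 hunit)
  calc F = subst L⁻¹ (subst L F) := (subst_subst L L⁻¹ hLM F).symm
    _ = subst L⁻¹ G := rfl
    _ = 0 := by rw [hG0, map_zero]
end

section
/- Let n ≥ 2, let i be an integer with 1 ≤ i ≤ n−1, and let m > i. Let Q_1,…,Q_{i+1} ∈ ℂ^{n+1} be linearly independent vectors, let H ⊆ ℂ^{n+1} be their linear span, and let I_H be the ideal of MvPolynomial (Fin (n+1)) ℂ generated by the linear forms vanishing identically on H. Then every form F of degree m+1 in n+1 variables that vanishes to order ≥ m at each point [Q_j] (1 ≤ j ≤ i+1) lies in the (m−i)-th power of the ideal I_H; that is, the linear span of the Q_j is a fixed component of multiplicity m−i for these forms. -/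
open MvPolynomial

/-- The ideal of a linear subspace `H ⊆ ℂ^N`: the ideal generated by the
degree-1 homogeneous polynomials vanishing at every point of `H`. -/
noncomputable def linearFormsIdeal {N : ℕ} (H : Submodule ℂ (Fin N → ℂ)) :
    Ideal (MvPolynomial (Fin N) ℂ) :=
  Ideal.span {L | L ∈ homogeneousSubmodule (Fin N) ℂ 1 ∧ ∀ w ∈ H, eval w L = 0}

namespace Stmt6Aux
variable {N : ℕ}

theorem derivMap_nil : derivMap ([] : List (Fin N)) = LinearMap.id := rfl

theorem derivMap_cons (k : Fin N) (l : List (Fin N)) (F : MvPolynomial (Fin N) ℂ) :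
    derivMap (k :: l) F = pderiv k (derivMap l F) := rfl

noncomputable def cntF (l : List (Fin N)) : Fin N →₀ ℕ :=
  (l.map fun k => Finsupp.single k 1).sum

theorem cntF_nil : cntF ([] : List (Fin N)) = 0 := rfl

theorem cntF_cons (k : Fin N) (l : List (Fin N)) :
    cntF (k :: l) = Finsupp.single k 1 + cntF l := by
  simp [cntF]

theorem cntF_apply (l : List (Fin N)) (k' : Fin N) : cntF l k' = l.count k' := by
  induction l with
  | nil => simp [cntF_nil]
  | cons k l ih =>
    rw [cntF_cons, Finsupp.add_apply, ih, List.count_cons]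
    rcases eq_or_ne k' k with h | h
    · simp [h, Finsupp.single_apply, Nat.add_comm]
    · simp [h, Finsupp.single_apply, Ne.symm h]

noncomputable def Dc : List (Fin N) → (Fin N →₀ ℕ) → ℕ
  | [], _ => 1
  | k :: l, s => Dc l s * (s - cntF l) k

theorem derivMap_monomial (l : List (Fin N)) (s : Fin N →₀ ℕ) (a : ℂ) :
    derivMap l (monomial s a) = monomial (s - cntF l) (a * (Dc l s : ℂ)) := by
  induction l with
  | nil => simp [derivMap_nil, cntF_nil, Dc]
  | cons k l ih =>
    rw [derivMap_cons, ih, pderiv_monomial, cntF_cons, Dc]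
    congr 1
    · rw [tsub_tsub, add_comm]
    · push_cast
      ring

theorem Dc_pos (l : List (Fin N)) (s : Fin N →₀ ℕ) (h : cntF l ≤ s) : 0 < Dc l s := by
  induction l with
  | nil => simp [Dc]
  | cons k l ih =>
    rw [cntF_cons] at h
    have h1 : cntF l ≤ s := le_trans (le_add_self) h
    rw [Finsupp.le_def] at h
    have h2 := h k
    simp only [Finsupp.add_apply, Finsupp.single_eq_same] at h2
    rw [Dc]
    have : 0 < (s - cntF l) k := by
      rw [Finsupp.tsub_apply]
      have := Finsupp.le_def.mp h1 k
      omega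
    exact Nat.mul_pos (ih h1) this

theorem cntF_le_of_Dc_ne_zero (l : List (Fin N)) (s : Fin N →₀ ℕ) (h : Dc l s ≠ 0) :
    cntF l ≤ s := by
  induction l with
  | nil => simp [cntF_nil]
  | cons k l ih =>
    rw [Dc] at h
    have h1 : cntF l ≤ s := ih (by intro h'; simp [h'] at h)
    have h2 : (s - cntF l) k ≠ 0 := by intro h'; simp [h'] at h
    rw [Finsupp.tsub_apply] at h2
    rw [cntF_cons, Finsupp.le_def]
    intro k'
    have := Finsupp.le_def.mp h1 k'
    rcases eq_or_ne k k' with rfl | hk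
    · rw [Finsupp.add_apply, Finsupp.single_eq_same]
      omega
    · rw [Finsupp.add_apply, Finsupp.single_eq_of_ne' hk]
      omega

end Stmt6Aux

namespace Stmt6Aux
variable {N : ℕ}

theorem degsum {d : Fin N →₀ ℕ} {φ : MvPolynomial (Fin N) ℂ} {n : ℕ}
    (hF : φ.IsHomogeneous n) (hd : coeff d φ ≠ 0) : ∑ k, d k = n := by
  have h := hF hd
  rw [Finsupp.weight_apply, Finsupp.sum_fintype] at h
  · simpa using h
  · intro _; simp

theorem aeval_single_monomial_of_subset (j : Fin N) (t : Fin N →₀ ℕ) (b : ℂ)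
    (h : ∀ k, k ≠ j → t k = 0) :
    aeval (Pi.single j (1:ℂ)) (monomial t b) = b := by
  rw [aeval_monomial]
  have : (t.prod fun n e => ((Pi.single j 1 : Fin N → ℂ) n) ^ e) = 1 := by
    apply Finset.prod_eq_one
    intro k hk
    rcases eq_or_ne k j with rfl | hkj
    · simp
    · exact absurd (h k hkj) (Finsupp.mem_support_iff.mp hk)
  rw [this]
  simp

theorem aeval_single_monomial_of_ne (j : Fin N) (t : Fin N →₀ ℕ) (b : ℂ)
    (k : Fin N) (hkj : k ≠ j) (hk : t k ≠ 0) :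
    aeval (Pi.single j (1:ℂ)) (monomial t b) = 0 := by
  rw [aeval_monomial]
  have : (t.prod fun n e => ((Pi.single j 1 : Fin N → ℂ) n) ^ e) = 0 := by
    apply Finset.prod_eq_zero (Finsupp.mem_support_iff.mpr hk)
    show ((Pi.single j 1 : Fin N → ℂ) k) ^ t k = 0
    rw [Pi.single_eq_of_ne hkj, zero_pow hk]
  rw [this]
  simp

theorem coeff_eq_zero_of_two_le {m : ℕ} (F : MvPolynomial (Fin N) ℂ)
    (hF : F.IsHomogeneous (m+1)) (j : Fin N)
    (hvan : F ∈ vanishingSubmodule (Pi.single j (1:ℂ)) m)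
    (α : Fin N →₀ ℕ) (hα : 2 ≤ α j) : coeff α F = 0 := by
  by_cases hαs : α ∈ F.support
  swap
  · exact notMem_support_iff.mp hαs
  have hαc : coeff α F ≠ 0 := mem_support_iff.mp hαs
  have hαd : ∑ k, α k = m + 1 := degsum hF hαc
  -- the list of derivatives
  set μ : Fin N →₀ ℕ := α.erase j with hμ
  set l : List (Fin N) := (Finsupp.toMultiset μ).toList with hl
  have hcnt : cntF l = μ := by
    ext k
    rw [cntF_apply, ← Multiset.coe_count, Multiset.coe_toList, Finsupp.count_toMultiset]
  have hμa : ∀ k, μ k = if k = j then 0 else α k := by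
    intro k
    rcases eq_or_ne k j with rfl | hk
    · simp [hμ]
    · simp [hμ, hk]
  have key : ∑ k, α k = α j + ∑ k, μ k := by
    calc ∑ k, α k = ∑ k, ((if k = j then α j else 0) + μ k) := by
          refine Finset.sum_congr rfl fun k _ => ?_
          rcases eq_or_ne k j with rfl | hk
          · simp [hμa]
          · simp [hμa, hk]
      _ = (∑ k, if k = j then α j else 0) + ∑ k, μ k := Finset.sum_add_distrib
      _ = α j + ∑ k, μ k := by
          rw [Finset.sum_ite_eq' Finset.univ j fun _ => α j]
          simp
  have hlen : l.length < m := by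
    have hll : l.length = ∑ k, μ k := by
      rw [hl, Multiset.length_toList, Finsupp.card_toMultiset, Finsupp.sum_fintype]
      · simp
      · intro _; rfl
    omega
  -- vanishing
  have h0 : aeval (Pi.single j (1:ℂ)) (derivMap l F) = 0 := by
    have h1 := (Submodule.mem_iInf _).mp hvan l
    have h2 := (Submodule.mem_iInf _).mp h1 hlen
    exact h2
  rw [F.as_sum, map_sum, map_sum] at h0
  have hterm : ∀ β ∈ F.support, β ≠ α →
      aeval (Pi.single j (1:ℂ)) (derivMap l (monomial β (coeff β F))) = 0 := by
    intro β hβ hβα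
    rw [derivMap_monomial]
    by_cases hDc : Dc l β = 0
    · simp [hDc]
    have hle : cntF l ≤ β := cntF_le_of_Dc_ne_zero l β hDc
    rw [hcnt] at hle
    by_cases hex : ∃ k, k ≠ j ∧ (β - cntF l) k ≠ 0
    · obtain ⟨k, hkj, hk⟩ := hex
      exact aeval_single_monomial_of_ne j _ _ k hkj hk
    · exfalso
      push_neg at hex
      apply hβα
      have heq : ∀ k, k ≠ j → β k = α k := by
        intro k hk
        have h3 := hex k hk
        rw [Finsupp.tsub_apply, hcnt, hμa k, if_neg hk] at h3
        have h4 := Finsupp.le_def.mp hle k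
        rw [hμa k, if_neg hk] at h4
        omega
      have hβd : ∑ k, β k = m + 1 := degsum hF (mem_support_iff.mp hβ)
      have hjj : β j = α j := by
        have e1 : α j + ∑ k ∈ Finset.univ.erase j, α k = ∑ k, α k :=
          Finset.add_sum_erase _ (fun k => α k) (Finset.mem_univ j)
        have e2 : β j + ∑ k ∈ Finset.univ.erase j, β k = ∑ k, β k :=
          Finset.add_sum_erase _ (fun k => β k) (Finset.mem_univ j)
        have e3 : ∑ k ∈ Finset.univ.erase j, β k = ∑ k ∈ Finset.univ.erase j, α k :=
          Finset.sum_congr rfl fun k hk => heq k (Finset.mem_erase.mp hk).1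
        omega
      ext k
      rcases eq_or_ne k j with rfl | hk
      · exact hjj
      · exact heq k hk
  rw [Finset.sum_eq_single α hterm (fun h => absurd hαs h)] at h0
  rw [derivMap_monomial] at h0
  have hDcα : (Dc l α : ℂ) ≠ 0 := by
    have : 0 < Dc l α := by
      apply Dc_pos
      rw [hcnt, Finsupp.le_def]
      intro k
      rw [hμa k]
      split <;> omega
    exact_mod_cast this.ne'
  have hαsup : ∀ k, k ≠ j → (α - cntF l) k = 0 := by
    intro k hk
    rw [Finsupp.tsub_apply, hcnt, hμa k, if_neg hk]
    omega
  rw [aeval_single_monomial_of_subset j _ _ hαsup] at h0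
  exact (mul_eq_zero.mp h0).resolve_right hDcα

end Stmt6Aux

namespace Stmt6Aux
variable {N : ℕ}

noncomputable def lsub (c : Matrix (Fin N) (Fin N) ℂ) :
    MvPolynomial (Fin N) ℂ →ₐ[ℂ] MvPolynomial (Fin N) ℂ :=
  bind₁ (fun l => ∑ t, C (c l t) * X t)

theorem lsub_apply (c : Matrix (Fin N) (Fin N) ℂ) (F : MvPolynomial (Fin N) ℂ) :
    lsub c F = bind₁ (fun l => ∑ t, C (c l t) * X t) F := rfl

theorem lsub_lsub (c c' : Matrix (Fin N) (Fin N) ℂ) (h : c * c' = 1)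
    (F : MvPolynomial (Fin N) ℂ) : lsub c' (lsub c F) = F := by
  rw [lsub_apply, lsub_apply, bind₁_bind₁]
  have hX : (fun l => bind₁ (fun t => ∑ s, C (c' t s) * X s) (∑ t, C (c l t) * X t))
      = (X : Fin N → MvPolynomial (Fin N) ℂ) := by
    funext l
    rw [map_sum]
    calc ∑ t, bind₁ (fun t => ∑ s, C (c' t s) * X s) (C (c l t) * X t)
        = ∑ t, ∑ s, C (c l t * c' t s) * X s := by
          refine Finset.sum_congr rfl fun t _ => ?_
          rw [map_mul, bind₁_C_right, bind₁_X_right, Finset.mul_sum]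
          refine Finset.sum_congr rfl fun s _ => ?_
          rw [map_mul, mul_assoc]
      _ = ∑ s, ∑ t, C (c l t * c' t s) * X s := Finset.sum_comm
      _ = ∑ s, C ((c * c') l s) * X s := by
          refine Finset.sum_congr rfl fun s _ => ?_
          rw [Matrix.mul_apply, map_sum, Finset.sum_mul]
      _ = X l := by
          rw [h]
          rw [Finset.sum_eq_single l]
          · simp [Matrix.one_apply]
          · intro s _ hsl
            simp [Matrix.one_apply, Ne.symm hsl]
          · simp
  rw [hX, bind₁_X_left, AlgHom.id_apply]

theorem eval_lsub (c : Matrix (Fin N) (Fin N) ℂ) (y : Fin N → ℂ)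
    (F : MvPolynomial (Fin N) ℂ) :
    aeval y (lsub c F) = aeval (c.mulVec y) F := by
  have hfun : (fun l => aeval y (∑ t, C (c l t) * X t)) = c.mulVec y := by
    funext l
    rw [map_sum, Matrix.mulVec]
    simp [dotProduct, mul_comm]
  rw [lsub_apply, aeval_bind₁, hfun]

theorem lsub_isHomogeneous (c : Matrix (Fin N) (Fin N) ℂ) {F : MvPolynomial (Fin N) ℂ}
    {d : ℕ} (hF : F.IsHomogeneous d) : (lsub c F).IsHomogeneous d := by
  have := hF.aeval (fun l => ∑ t, C (c l t) * X t) (n := 1) ?_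
  · have h2 : lsub c F = aeval (fun l => ∑ t, C (c l t) * X t) F := rfl
    rw [h2]
    simpa using this
  · intro l
    apply MvPolynomial.IsHomogeneous.sum
    intro t _
    simpa using (isHomogeneous_X ℂ t).C_mul (c l t)

theorem pderiv_lsub (c : Matrix (Fin N) (Fin N) ℂ) (k : Fin N)
    (F : MvPolynomial (Fin N) ℂ) :
    pderiv k (lsub c F) = ∑ t, C (c t k) * lsub c (pderiv t F) := by
  induction F using MvPolynomial.induction_on with
  | C a => simp [lsub_apply]
  | add p q hp hq =>
      simp only [map_add, hp, hq, mul_add, ← Finset.sum_add_distrib]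
  | mul_X p l hp =>
      have hgl : pderiv k (∑ t, C (c l t) * X t) = C (c l k) := by
        rw [map_sum, Finset.sum_eq_single k]
        · simp [pderiv_C_mul]
        · intro t _ htk
          simp [pderiv_C_mul, pderiv_X_of_ne htk]
        · simp
      have hXl : lsub c (X l) = ∑ t, C (c l t) * X t := bind₁_X_right _ l
      rw [map_mul, hXl, pderiv_mul, hp, hgl]
      have hR : ∀ t, C (c t k) * lsub c (pderiv t (p * X l)) =
          C (c t k) * lsub c (pderiv t p) * (∑ s, C (c l s) * X s)
          + (if t = l then C (c t k) * lsub c p else 0) := by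
        intro t
        rw [pderiv_mul, map_add, map_mul, hXl]
        rcases eq_or_ne t l with rfl | htl
        · rw [if_pos rfl, pderiv_X_self, mul_one]
          ring
        · rw [if_neg htl, pderiv_X_of_ne (Ne.symm htl)]
          simp [mul_assoc]
      rw [Finset.sum_congr rfl fun t _ => hR t, Finset.sum_add_distrib, Finset.sum_ite_eq' Finset.univ l (fun t => C (c t k) * lsub c p)]
      simp only [Finset.mem_univ, if_pos]
      rw [Finset.sum_mul]
      ring

end Stmt6Aux

namespace Stmt6Aux
variable {N : ℕ}

theorem derivMap_lsub_mem_span (c : Matrix (Fin N) (Fin N) ℂ) (l : List (Fin N))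
    (F : MvPolynomial (Fin N) ℂ) :
    derivMap l (lsub c F) ∈ Submodule.span ℂ
      {G | ∃ l' : List (Fin N), l'.length = l.length ∧ G = lsub c (derivMap l' F)} := by
  induction l with
  | nil => exact Submodule.subset_span ⟨[], rfl, rfl⟩
  | cons k l ih =>
    rw [derivMap_cons]
    have hle : Submodule.span ℂ
          {G | ∃ l' : List (Fin N), l'.length = l.length ∧ G = lsub c (derivMap l' F)} ≤
        (Submodule.span ℂ {G | ∃ l' : List (Fin N), l'.length = (k :: l).length ∧
            G = lsub c (derivMap l' F)}).comap (pderiv k).toLinearMap := by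
      rw [Submodule.span_le]
      rintro G ⟨l', hl', rfl⟩
      rw [SetLike.mem_coe, Submodule.mem_comap]
      show pderiv k (lsub c (derivMap l' F)) ∈ _
      rw [pderiv_lsub]
      apply Submodule.sum_mem
      intro t _
      rw [C_mul']
      apply Submodule.smul_mem
      apply Submodule.subset_span
      exact ⟨t :: l', by simp [hl'], by rw [derivMap_cons]⟩
    exact hle ih

theorem lsub_mem_vanishing (c : Matrix (Fin N) (Fin N) ℂ) (a : Fin N → ℂ) (k : ℕ)
    (F : MvPolynomial (Fin N) ℂ) (hF : F ∈ vanishingSubmodule (c.mulVec a) k) :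
    lsub c F ∈ vanishingSubmodule a k := by
  rw [vanishingSubmodule, Submodule.mem_iInf]
  intro l
  rw [Submodule.mem_iInf]
  intro hl
  rw [LinearMap.mem_ker, LinearMap.comp_apply, AlgHom.toLinearMap_apply]
  have hsp := derivMap_lsub_mem_span c l F
  have hker : Submodule.span ℂ
      {G | ∃ l' : List (Fin N), l'.length = l.length ∧ G = lsub c (derivMap l' F)} ≤
      LinearMap.ker (aeval a).toLinearMap := by
    rw [Submodule.span_le]
    rintro G ⟨l', hl', rfl⟩
    rw [SetLike.mem_coe, LinearMap.mem_ker, AlgHom.toLinearMap_apply, eval_lsub]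
    have h1 := (Submodule.mem_iInf _).mp hF l'
    have h2 := (Submodule.mem_iInf _).mp h1 (by omega)
    exact h2
  exact hker hsp

theorem monomial_mem_pow (S : Set (Fin N)) [DecidablePred (· ∈ S)] (r : ℕ)
    (s : Fin N →₀ ℕ) (a : ℂ)
    (h : r ≤ ∑ k ∈ Finset.univ.filter (· ∈ S), s k) :
    monomial s a ∈ (Ideal.span {G | ∃ k ∈ S, G = X k}) ^ r := by
  induction r generalizing s with
  | zero => simp [Ideal.one_eq_top]
  | succ r ih =>
    have hex : ∃ k ∈ Finset.univ.filter (· ∈ S), s k ≠ 0 := by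
      by_contra hc
      push_neg at hc
      have : ∑ k ∈ Finset.univ.filter (· ∈ S), s k = 0 :=
        Finset.sum_eq_zero fun k hk => hc k hk
      omega
    obtain ⟨k, hkf, hsk⟩ := hex
    have hkS : k ∈ S := by simpa using (Finset.mem_filter.mp hkf).2
    set s' : Fin N →₀ ℕ := s - Finsupp.single k 1 with hs'
    have hs'a : ∀ k', s' k' = if k' = k then s k - 1 else s k' := by
      intro k'
      rw [hs', Finsupp.tsub_apply, Finsupp.single_apply]
      rcases eq_or_ne k' k with rfl | hk'
      · simp
      · simp [hk', Ne.symm hk']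
    have hsadd : s' + Finsupp.single k 1 = s := by
      ext k'
      rw [Finsupp.add_apply, hs'a k', Finsupp.single_apply]
      rcases eq_or_ne k' k with rfl | hk'
      · rw [if_pos rfl, if_pos rfl]
        omega
      · simp [hk', Ne.symm hk']
    have hmono : monomial s a = monomial s' a * X k := by
      rw [X, monomial_mul, mul_one, hsadd]
    have hsum' : r ≤ ∑ k' ∈ Finset.univ.filter (· ∈ S), s' k' := by
      have e1 : s' k + ∑ k' ∈ (Finset.univ.filter (· ∈ S)).erase k, s' k' =
          ∑ k' ∈ Finset.univ.filter (· ∈ S), s' k' :=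
        Finset.add_sum_erase _ (fun k' => s' k') hkf
      have e2 : s k + ∑ k' ∈ (Finset.univ.filter (· ∈ S)).erase k, s k' =
          ∑ k' ∈ Finset.univ.filter (· ∈ S), s k' :=
        Finset.add_sum_erase _ (fun k' => s k') hkf
      have e3 : ∑ k' ∈ (Finset.univ.filter (· ∈ S)).erase k, s' k' =
          ∑ k' ∈ (Finset.univ.filter (· ∈ S)).erase k, s k' :=
        Finset.sum_congr rfl fun k' hk' => by
          rw [hs'a k', if_neg (Finset.mem_erase.mp hk').1]
      have e4 : s' k = s k - 1 := by rw [hs'a k, if_pos rfl]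
      omega
    rw [hmono, pow_succ]
    exact Ideal.mul_mem_mul (ih s' hsum')
      (Ideal.subset_span ⟨k, hkS, rfl⟩)

theorem mem_pow_of_support (F : MvPolynomial (Fin N) ℂ) (S : Set (Fin N))
    [DecidablePred (· ∈ S)] (r : ℕ)
    (h : ∀ α ∈ F.support, r ≤ ∑ k ∈ Finset.univ.filter (· ∈ S), α k) :
    F ∈ (Ideal.span {G | ∃ k ∈ S, G = X k}) ^ r := by
  rw [F.as_sum]
  exact Submodule.sum_mem _ fun α hα => monomial_mem_pow S r α (coeff α F) (h α hα)

end Stmt6Aux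

open Stmt6Aux

theorem stmt6 (n i m : ℕ) (hn : 2 ≤ n) (hi1 : 1 ≤ i) (hi2 : i ≤ n - 1) (him : i < m)
    (Q : Fin (i + 1) → (Fin (n + 1) → ℂ)) (hQ : LinearIndependent ℂ Q)
    (F : MvPolynomial (Fin (n + 1)) ℂ) (hF : F.IsHomogeneous (m + 1))
    (hvan : ∀ j, F ∈ vanishingSubmodule (Q j) m) :
    F ∈ (linearFormsIdeal (Submodule.span ℂ (Set.range Q))) ^ (m - i) := by
  classical
  have hQr : LinearIndepOn ℂ id (Set.range Q) :=
    (linearIndepOn_id_range_iff hQ.injective).mpr hQ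
  have hsub : Set.range Q ⊆ hQr.extend (Set.subset_univ _) := hQr.subset_extend _
  let B : Module.Basis (hQr.extend (Set.subset_univ _)) ℂ (Fin (n+1) → ℂ) := Module.Basis.extend hQr
  haveI : Fintype (hQr.extend (Set.subset_univ _)) := IsNoetherian.fintypeBasisIndex B
  have hcard : Fintype.card (hQr.extend (Set.subset_univ (Set.range Q))) = n + 1 := by
    rw [← Module.finrank_eq_card_basis B, Module.finrank_fintype_fun_eq_card, Fintype.card_fin]
  let e := Fintype.equivFinOfCardEq hcard
  let b : Module.Basis (Fin (n+1)) ℂ (Fin (n+1) → ℂ) := B.reindex e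
  let emb : Fin (i+1) → Fin (n+1) := fun j => e ⟨Q j, hsub ⟨j, rfl⟩⟩
  have hbemb : ∀ j, b (emb j) = Q j := by
    intro j
    show B.reindex e (e ⟨Q j, _⟩) = Q j
    rw [Module.Basis.reindex_apply, Equiv.symm_apply_apply]
    exact Module.Basis.extend_apply_self hQr _
  have hembinj : Function.Injective emb := by
    intro j1 j2 h
    have h2 := congrArg b h
    rw [hbemb, hbemb] at h2
    exact hQ.injective h2
  -- matrices
  set P := Pi.basisFun ℂ (Fin (n+1)) with hP
  set A : Matrix (Fin (n+1)) (Fin (n+1)) ℂ := P.toMatrix ⇑b with hA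
  set A' : Matrix (Fin (n+1)) (Fin (n+1)) ℂ := b.toMatrix ⇑P with hA'
  have hAA' : A * A' = 1 := Module.Basis.toMatrix_mul_toMatrix_flip P b
  have hA'A : A' * A = 1 := Module.Basis.toMatrix_mul_toMatrix_flip b P
  have hAentry : ∀ l t, A l t = b t l := by
    intro l t
    show P.repr (b t) l = b t l
    rw [hP, Pi.basisFun_repr]
  have hAmul : ∀ j, A.mulVec (Pi.single (emb j) (1:ℂ)) = Q j := by
    intro j
    rw [Matrix.mulVec_single]
    funext l
    rw [MulOpposite.op_one, one_smul]
    show A l (emb j) = Q j l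
    rw [hAentry l (emb j), hbemb j]
  have hA'mul : ∀ j, A'.mulVec (Q j) = Pi.single (emb j) (1:ℂ) := by
    intro j
    rw [← hAmul j, Matrix.mulVec_mulVec, hA'A, Matrix.one_mulVec]
  -- transformed polynomial
  set F' := lsub A F with hF'def
  have hF' : F'.IsHomogeneous (m+1) := lsub_isHomogeneous A hF
  have hvan' : ∀ j, F' ∈ vanishingSubmodule (Pi.single (emb j) (1:ℂ)) m := by
    intro j
    apply lsub_mem_vanishing
    rw [hAmul j]
    exact hvan j
  have hcoeff : ∀ α ∈ F'.support, ∀ j, α (emb j) ≤ 1 := by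
    intro α hα j
    by_contra hc
    push_neg at hc
    have h0 := coeff_eq_zero_of_two_le F' hF' (emb j) (hvan' j) α hc
    exact (mem_support_iff.mp hα) h0
  set S : Set (Fin (n+1)) := {k | k ∉ Set.range emb} with hS
  have hfe : Finset.univ.filter (· ∈ S) =
      Finset.univ.filter (fun k => ¬ k ∈ Set.range emb) := by
    ext k
    simp [hS]
  have hsupp : ∀ α ∈ F'.support, m - i ≤ ∑ k ∈ Finset.univ.filter (· ∈ S), α k := by
    intro α hα
    have hdeg : ∑ k, α k = m + 1 := degsum hF' (mem_support_iff.mp hα)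
    have hsplit : ∑ k ∈ Finset.univ.filter (fun k => k ∈ Set.range emb), α k
        + ∑ k ∈ Finset.univ.filter (fun k => ¬ k ∈ Set.range emb), α k = ∑ k, α k :=
      Finset.sum_filter_add_sum_filter_not _ _ _
    have hT : Finset.univ.filter (fun k => k ∈ Set.range emb)
        = Finset.image emb Finset.univ := by
      ext k
      simp [Set.mem_range, eq_comm]
    have hbound : ∑ k ∈ Finset.univ.filter (fun k => k ∈ Set.range emb), α k ≤ i + 1 := by
      calc ∑ k ∈ Finset.univ.filter (fun k => k ∈ Set.range emb), α k
          ≤ ∑ _k ∈ Finset.univ.filter (fun k => k ∈ Set.range emb), 1 := by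
            refine Finset.sum_le_sum fun k hk => ?_
            obtain ⟨j, rfl⟩ : ∃ j, emb j = k := by
              simpa using (Finset.mem_filter.mp hk).2
            exact hcoeff α hα j
        _ = (Finset.univ.filter (fun k => k ∈ Set.range emb)).card := by simp
        _ = i + 1 := by
            rw [hT, Finset.card_image_of_injective _ hembinj]
            simp
    rw [hfe]
    omega
  have hmem : F' ∈ (Ideal.span {G | ∃ k ∈ S, G = X k}) ^ (m - i) :=
    mem_pow_of_support F' S (m - i) hsupp
  have hFF : F = lsub A' F' := (lsub_lsub A A' hAA' F).symm
  have hmap : F ∈ Ideal.map (lsub A' : MvPolynomial (Fin (n+1)) ℂ →ₐ[ℂ] _).toRingHom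
      ((Ideal.span {G | ∃ k ∈ S, G = X k}) ^ (m - i)) := by
    rw [hFF]
    exact Ideal.mem_map_of_mem _ hmem
  rw [Ideal.map_pow, Ideal.map_span] at hmap
  have hle : Ideal.span ((lsub A' : MvPolynomial (Fin (n+1)) ℂ →ₐ[ℂ] _).toRingHom ''
      {G | ∃ k ∈ S, G = X k}) ≤ linearFormsIdeal (Submodule.span ℂ (Set.range Q)) := by
    rw [Ideal.span_le]
    rintro G ⟨G0, ⟨k, hkS, rfl⟩, rfl⟩
    apply Ideal.subset_span
    have hGX : (lsub A' : MvPolynomial (Fin (n+1)) ℂ →ₐ[ℂ] _).toRingHom (X k)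
        = lsub A' (X k) := rfl
    constructor
    · rw [mem_homogeneousSubmodule, hGX]
      have hXk : lsub A' (X k) = ∑ t, C (A' k t) * X t := bind₁_X_right _ k
      rw [hXk]
      apply MvPolynomial.IsHomogeneous.sum
      intro t _
      simpa using (isHomogeneous_X ℂ t).C_mul (A' k t)
    · intro w hw
      have hker : Submodule.span ℂ (Set.range Q) ≤
          LinearMap.ker ((LinearMap.proj k).comp (Matrix.mulVecLin A')) := by
        rw [Submodule.span_le]
        rintro w' ⟨j, rfl⟩
        rw [SetLike.mem_coe, LinearMap.mem_ker, LinearMap.comp_apply,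
          Matrix.mulVecLin_apply, hA'mul j, LinearMap.proj_apply]
        have hne : k ≠ emb j := fun h => hkS ⟨j, h.symm⟩
        rw [Pi.single_eq_of_ne hne]
      have h0 : A'.mulVec w k = 0 := hker hw
      have heval : eval w ((lsub A' : MvPolynomial (Fin (n+1)) ℂ →ₐ[ℂ] _).toRingHom (X k))
          = aeval w (lsub A' (X k)) := rfl
      rw [heval, eval_lsub, aeval_X]
      exact h0
  exact Ideal.pow_right_mono hle (m - i) hmap
end

section
/- Let m ≥ 3 and x ≥ 1 be natural numbers, let V be a ℂ-linear subspace of the space of forms of degree m in m+1 variables, and let W_1,…,W_x ⊆ ℂ^{m+1} be planes (3-dimensional linear subspaces). Suppose there exist nonzero vectors R_1 ∈ W_1, …, R_x ∈ W_x such that the subspace { F ∈ V : F vanishes to order ≥ 2 at each [R_i] } has dimension dim V − x(m+1). Then there exist nonzero vectors P_{i,1}, P_{i,2} ∈ W_i (1 ≤ i ≤ x) such that the subspace { F ∈ V : F(P_{i,1}) = F(P_{i,2}) = 0 for all i } has dimension dim V − 2x. -/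
open MvPolynomial

lemma mem_vanishing_one {N : ℕ} (a : Fin N → ℂ) (F : MvPolynomial (Fin N) ℂ) :
    F ∈ vanishingSubmodule a 1 ↔ aeval a F = 0 := by
  simp only [vanishingSubmodule, Submodule.mem_iInf, LinearMap.mem_ker, LinearMap.coe_comp,
    Function.comp_apply, AlgHom.toLinearMap_apply, Nat.lt_one_iff, List.length_eq_zero_iff]
  constructor
  · intro h; simpa [derivMap] using h [] rfl
  · rintro h l rfl; simpa [derivMap] using h

lemma mem_vanishing_two {N : ℕ} (a : Fin N → ℂ) (F : MvPolynomial (Fin N) ℂ) :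
    F ∈ vanishingSubmodule a 2 ↔
      aeval a F = 0 ∧ ∀ j, aeval a (pderiv j F) = 0 := by
  simp only [vanishingSubmodule, Submodule.mem_iInf, LinearMap.mem_ker, LinearMap.coe_comp,
    Function.comp_apply, AlgHom.toLinearMap_apply]
  constructor
  · intro h
    refine ⟨by simpa [derivMap] using h [] (by norm_num), fun j => by
      simpa [derivMap] using h [j] (by norm_num)⟩
  · rintro ⟨h0, h1⟩ l hl
    interval_cases hl' : l.length
    · rw [List.length_eq_zero_iff] at hl'; subst hl'; simpa [derivMap] using h0
    · match l with
      | [j] => simpa [derivMap] using h1 j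


lemma chain_rule {N : ℕ} (a v : Fin N → ℂ) (F : MvPolynomial (Fin N) ℂ) :
    Polynomial.derivative
        ((MvPolynomial.aeval (fun j => Polynomial.C (a j) + Polynomial.C (v j) * Polynomial.X)) F)
      = ∑ j, Polynomial.C (v j) *
          (MvPolynomial.aeval (fun j => Polynomial.C (a j) + Polynomial.C (v j) * Polynomial.X))
            (pderiv j F) := by
  set φ : Fin N → Polynomial ℂ := fun j => Polynomial.C (a j) + Polynomial.C (v j) * Polynomial.X
    with hφ
  induction F using MvPolynomial.induction_on with
  | C c => simp
  | add p q hp hq =>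
      simp [hp, hq, mul_add, Finset.sum_add_distrib]
  | mul_X p i hp =>
      have key : ∀ j : Fin N, Polynomial.C (v j) * (MvPolynomial.aeval φ) (p * pderiv j (X i))
          = if j = i then Polynomial.C (v i) * (MvPolynomial.aeval φ) p else 0 := by
        intro j
        by_cases h : j = i
        · subst h; simp [pderiv_X_self]
        · rw [pderiv_X_of_ne (Ne.symm h)]; simp [h]
      have hXi : pderiv i (X i : MvPolynomial (Fin N) ℂ) = 1 := pderiv_X_self i
      calc Polynomial.derivative ((MvPolynomial.aeval φ) (p * X i))
          = Polynomial.derivative ((MvPolynomial.aeval φ) p * φ i) := by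
            rw [map_mul, MvPolynomial.aeval_X]
        _ = Polynomial.derivative ((MvPolynomial.aeval φ) p) * φ i
              + (MvPolynomial.aeval φ) p * Polynomial.C (v i) := by
            rw [Polynomial.derivative_mul]; congr 1; rw [hφ]; simp
        _ = (∑ j, Polynomial.C (v j) * (MvPolynomial.aeval φ) (pderiv j p)) * φ i
              + ∑ j, Polynomial.C (v j) * (MvPolynomial.aeval φ) (p * pderiv j (X i)) := by
            rw [hp]; congr 1
            rw [Finset.sum_congr rfl (fun j _ => key j)]
            simp [mul_comm]
        _ = ∑ j, Polynomial.C (v j) * (MvPolynomial.aeval φ) (pderiv j (p * X i)) := by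
            rw [Finset.sum_mul, ← Finset.sum_add_distrib]
            refine Finset.sum_congr rfl fun j _ => ?_
            rw [pderiv_mul, map_add, mul_add, map_mul, map_mul, MvPolynomial.aeval_X]
            ring

open MvPolynomial

lemma euler_monomial {N m : ℕ} (a : Fin N → ℂ) (d : Fin N →₀ ℕ) (c : ℂ) (hd : d.degree = m) :
    (m : ℂ) * MvPolynomial.aeval a (monomial d c)
      = ∑ j, a j * MvPolynomial.aeval a (pderiv j (monomial d c)) := by
  have key : ∀ j : Fin N, a j * MvPolynomial.aeval a (pderiv j (monomial d c))
      = (d j : ℂ) * (c * d.prod fun i k => a i ^ k) := by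
    intro j
    rw [pderiv_monomial, aeval_monomial]
    by_cases h : d j = 0
    · have : d - Finsupp.single j 1 = d := by
        ext i
        rcases eq_or_ne i j with rfl | hij
        · simp [h]
        · simp [Finsupp.single_eq_of_ne' (Ne.symm hij)]
      rw [this, h]
      simp
    · obtain ⟨k, hk⟩ := Nat.exists_eq_succ_of_ne_zero h
      have hdecomp : d = (d - Finsupp.single j 1) + Finsupp.single j 1 := by
        ext i
        rcases eq_or_ne i j with rfl | hij
        · simp [hk]
        · simp [Finsupp.single_eq_of_ne' (Ne.symm hij)]
      have hprod : d.prod (fun i k => a i ^ k)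
          = (d - Finsupp.single j 1).prod (fun i k => a i ^ k) * a j := by
        conv_lhs => rw [hdecomp]
        rw [Finsupp.prod_add_index' (by simp) (fun i k l => pow_add (a i) k l)]
        rw [Finsupp.prod_single_index (by simp)]
        simp
      rw [hprod]
      simp only [Algebra.algebraMap_self_apply]
      ring
  rw [Finset.sum_congr rfl (fun j _ => key j), ← Finset.sum_mul]
  have hsum : ∑ j : Fin N, (d j : ℂ) = (m : ℂ) := by
    rw [← hd, Finsupp.degree_apply]
    push_cast
    rw [Finset.sum_subset (Finset.subset_univ d.support)]
    intro i _ hi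
    simp [Finsupp.notMem_support_iff.mp hi]
  rw [hsum, aeval_monomial]
  simp only [Algebra.algebraMap_self_apply]

lemma euler {N m : ℕ} (a : Fin N → ℂ) {F : MvPolynomial (Fin N) ℂ}
    (hF : F.IsHomogeneous m) :
    (m : ℂ) * MvPolynomial.aeval a F = ∑ j, a j * MvPolynomial.aeval a (pderiv j F) := by
  conv_lhs => rw [← support_sum_monomial_coeff F]
  conv_rhs => rw [← support_sum_monomial_coeff F]
  rw [map_sum, Finset.mul_sum]
  have : ∀ j : Fin N, a j * MvPolynomial.aeval a (pderiv j (∑ d ∈ F.support, monomial d (coeff d F)))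
      = ∑ d ∈ F.support, a j * MvPolynomial.aeval a (pderiv j (monomial d (coeff d F))) := by
    intro j; rw [map_sum, map_sum, Finset.mul_sum]
  rw [Finset.sum_congr rfl fun j _ => this j, Finset.sum_comm]
  refine Finset.sum_congr rfl fun d hd => ?_
  refine euler_monomial a d _ ?_
  by_contra h
  exact (mem_support_iff.mp hd) (hF.coeff_eq_zero h)


lemma pair_surj {n : ℕ} {b c : Fin n → ℂ} (hb : b ≠ 0) (hc : ∀ t : ℂ, c ≠ t • b)
    (s u : ℂ) : ∃ g : Fin n → ℂ, (∑ j, b j * g j = s) ∧ (∑ j, c j * g j = u) := by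
  obtain ⟨j0, hj0⟩ : ∃ j, b j ≠ 0 := by
    by_contra h; push_neg at h; exact hb (funext h)
  set c' : Fin n → ℂ := c - (c j0 / b j0) • b with hc'
  have hc'0 : c' ≠ 0 := by
    intro h
    apply hc (c j0 / b j0)
    have := sub_eq_zero.mp h
    exact this
  obtain ⟨j1, hj1⟩ : ∃ j, c' j ≠ 0 := by
    by_contra h; push_neg at h; exact hc'0 (funext h)
  have hj1j0 : j1 ≠ j0 := by
    intro h; subst h
    apply hj1
    simp only [hc', Pi.sub_apply, Pi.smul_apply, smul_eq_mul]
    field_simp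
    ring
  set det : ℂ := b j0 * c j1 - b j1 * c j0 with hdet
  have hdet0 : det ≠ 0 := by
    have : det = b j0 * c' j1 := by
      simp only [hc', Pi.sub_apply, Pi.smul_apply, smul_eq_mul, hdet]
      field_simp
    rw [this]
    exact mul_ne_zero hj0 hj1
  set g0 : ℂ := (s * c j1 - u * b j1) / det with hg0
  set g1 : ℂ := (b j0 * u - c j0 * s) / det with hg1
  refine ⟨fun j => if j = j0 then g0 else if j = j1 then g1 else 0, ?_, ?_⟩ <;>
  · rw [show ∀ w : Fin n → ℂ, (∑ j, w j * (if j = j0 then g0 else if j = j1 then g1 else 0))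
        = w j0 * g0 + w j1 * g1 from ?_]
    · rw [hg0, hg1, mul_div_assoc', mul_div_assoc', ← add_div, div_eq_iff hdet0, hdet]
      ring
    · intro w
      have : ∀ j : Fin n, w j * (if j = j0 then g0 else if j = j1 then g1 else 0)
          = (if j = j0 then w j0 * g0 else 0) + (if j = j1 then w j1 * g1 else 0) := by
        intro j
        rcases eq_or_ne j j0 with rfl | h0
        · simp [Ne.symm hj1j0, hj1j0]
        · rcases eq_or_ne j j1 with rfl | h1
          · simp [h0]
          · simp [h0, h1]
      rw [Finset.sum_congr rfl fun j _ => this j, Finset.sum_add_distrib]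
      simp


lemma eval_aeval_line {N : ℕ} (a v : Fin N → ℂ) (F : MvPolynomial (Fin N) ℂ) (t : ℂ) :
    Polynomial.eval t
        ((MvPolynomial.aeval (fun j => Polynomial.C (a j) + Polynomial.C (v j) * Polynomial.X)) F)
      = MvPolynomial.aeval (fun j => a j + v j * t) F := by
  have := congrFun (congrArg (fun (ψ : MvPolynomial (Fin N) ℂ →ₐ[ℂ] ℂ) => (ψ : MvPolynomial (Fin N) ℂ → ℂ))
    (MvPolynomial.comp_aeval (R := ℂ)
      (f := fun j => Polynomial.C (a j) + Polynomial.C (v j) * Polynomial.X)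
      (Polynomial.aeval t))) F
  simp only [AlgHom.coe_comp, Function.comp_apply, map_add, map_mul, Polynomial.aeval_C,
    Polynomial.aeval_X, Algebra.algebraMap_self_apply] at this
  rw [← this]
  rw [Polynomial.aeval_def, Algebra.algebraMap_self]
  rfl

lemma coeff_one_aeval_line {N : ℕ} (a v : Fin N → ℂ) (F : MvPolynomial (Fin N) ℂ) :
    ((MvPolynomial.aeval (fun j => Polynomial.C (a j) + Polynomial.C (v j) * Polynomial.X)) F).coeff 1
      = ∑ j, v j * MvPolynomial.aeval a (pderiv j F) := by
  have h1 : ((MvPolynomial.aeval (fun j => Polynomial.C (a j) + Polynomial.C (v j) * Polynomial.X)) F).coeff 1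
      = (Polynomial.derivative ((MvPolynomial.aeval (fun j => Polynomial.C (a j) + Polynomial.C (v j) * Polynomial.X)) F)).coeff 0 := by
    rw [Polynomial.coeff_derivative]
    push_cast
    ring
  rw [h1, chain_rule, Polynomial.coeff_zero_eq_eval_zero, Polynomial.eval_finset_sum]
  refine Finset.sum_congr rfl fun j _ => ?_
  rw [Polynomial.eval_mul, Polynomial.eval_C, eval_aeval_line]
  simp


lemma finrank_comap_inf {M : Type*} [AddCommGroup M] [Module ℂ M]
    (V S : Submodule ℂ M) :
    Module.finrank ℂ ↥(Submodule.comap V.subtype S) = Module.finrank ℂ ↥(V ⊓ S) := by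
  have h1 : Submodule.comap V.subtype S = Submodule.comap V.subtype (V ⊓ S) := by
    rw [Submodule.comap_inf, Submodule.comap_subtype_self, top_inf_eq]
  rw [h1]
  exact LinearEquiv.finrank_eq (Submodule.comapSubtypeEquivOfLe inf_le_left)

theorem stmt7 (m x : ℕ) (hm : 3 ≤ m) (hx : 1 ≤ x)
    (V : Submodule ℂ (MvPolynomial (Fin (m + 1)) ℂ))
    (hV : V ≤ homogeneousSubmodule (Fin (m + 1)) ℂ m)
    (W : Fin x → Submodule ℂ (Fin (m + 1) → ℂ))
    (hW : ∀ i, Module.finrank ℂ (W i) = 3)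
    (hexists : ∃ R : Fin x → (Fin (m + 1) → ℂ),
      (∀ i, R i ∈ W i) ∧ (∀ i, R i ≠ 0) ∧
      (Module.finrank ℂ ↥(V ⊓ ⨅ i, vanishingSubmodule (R i) 2) : ℤ)
        = Module.finrank ℂ V - x * (m + 1)) :
    ∃ P : Fin x → Fin 2 → (Fin (m + 1) → ℂ),
      (∀ i j, P i j ∈ W i) ∧ (∀ i j, P i j ≠ 0) ∧
      (Module.finrank ℂ ↥(V ⊓ ⨅ i, ⨅ j, vanishingSubmodule (P i j) 1) : ℤ)
        = Module.finrank ℂ V - 2 * x := by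
  classical
  obtain ⟨R, hRW, hR0, hdim⟩ := hexists
  have hm0 : (m : ℂ) ≠ 0 := Nat.cast_ne_zero.mpr (by omega)
  -- V is finite dimensional
  haveI hVfin : FiniteDimensional ℂ V := by
    have hle : V ≤ restrictTotalDegree (Fin (m + 1)) ℂ m := by
      intro F hF
      rw [mem_restrictTotalDegree]
      exact ((mem_homogeneousSubmodule _ _).mp (hV hF)).totalDegree_le
    exact Submodule.finiteDimensional_of_le hle
  have hVhom : ∀ F : V, (F : MvPolynomial (Fin (m + 1)) ℂ).IsHomogeneous m :=
    fun F => (mem_homogeneousSubmodule _ _).mp (hV F.2)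
  -- choose v i ∈ W i independent from R i
  have hv : ∀ i : Fin x, ∃ w, w ∈ W i ∧ w ∉ Submodule.span ℂ {R i} := by
    intro i
    by_contra h
    push_neg at h
    have hle : W i ≤ Submodule.span ℂ {R i} := h
    have h1 : Module.finrank ℂ (W i) ≤ Module.finrank ℂ (Submodule.span ℂ {R i}) :=
      Submodule.finrank_mono hle
    rw [hW i, finrank_span_singleton (hR0 i)] at h1
    omega
  choose v hvW hvs using hv
  have hvR : ∀ i (t : ℂ), v i ≠ t • R i := by
    intro i t h
    exact hvs i (h ▸ Submodule.smul_mem _ t (Submodule.mem_span_singleton_self (R i)))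
  -- the gradient map Φ
  set Φ : V →ₗ[ℂ] ((Fin x × Fin (m + 1)) → ℂ) := LinearMap.pi (fun q =>
    (MvPolynomial.aeval (R q.1)).toLinearMap ∘ₗ (pderiv q.2).toLinearMap ∘ₗ V.subtype) with hΦ
  have hΦapp : ∀ (G : V) q, Φ G q = MvPolynomial.aeval (R q.1) (pderiv q.2 G.val) := by
    intro G q
    simp [hΦ]
  have hkerΦ : LinearMap.ker Φ
      = Submodule.comap V.subtype (⨅ i, vanishingSubmodule (R i) 2) := by
    ext F
    simp only [LinearMap.mem_ker, Submodule.mem_comap, Submodule.mem_iInf]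
    constructor
    · intro h i
      have hz : ∀ q : Fin x × Fin (m + 1),
          MvPolynomial.aeval (R q.1) (pderiv q.2 F.val) = 0 := by
        intro q
        rw [← hΦapp F q, h]
        rfl
      rw [mem_vanishing_two]
      refine ⟨?_, fun j => hz (i, j)⟩
      have he := euler (R i) (hVhom F)
      rw [Finset.sum_congr rfl (fun j _ => by rw [hz (i, j), mul_zero])] at he
      simp only [Finset.sum_const_zero] at he
      exact (mul_eq_zero.mp he).resolve_left hm0
    · intro h
      funext q
      rw [hΦapp]
      exact ((mem_vanishing_two _ _).mp (h q.1)).2 q.2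
  -- Φ is surjective
  have hΦsurj : Function.Surjective Φ := by
    have h2 := LinearMap.finrank_range_add_finrank_ker Φ
    have h5 : Module.finrank ℂ (LinearMap.ker Φ)
        = Module.finrank ℂ ↥(V ⊓ ⨅ i, vanishingSubmodule (R i) 2) := by
      rw [hkerΦ, finrank_comap_inf]
    have h3 : Module.finrank ℂ ((Fin x × Fin (m + 1)) → ℂ) = x * (m + 1) := by
      rw [Module.finrank_pi]
      simp
    have hcast : ((x * (m + 1) : ℕ) : ℤ) = (x : ℤ) * ((m : ℤ) + 1) := by push_cast; ring
    rw [← hcast] at hdim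
    have h4 : Module.finrank ℂ ↥(V ⊓ ⨅ i, vanishingSubmodule (R i) 2) + x * (m + 1)
        = Module.finrank ℂ V := by omega
    have h6 : Module.finrank ℂ (LinearMap.range Φ) = x * (m + 1) := by omega
    rw [← LinearMap.range_eq_top]
    apply Submodule.eq_top_of_finrank_eq
    rw [h6, h3]
  -- joint surjectivity of evaluation + directional derivative at the points R i
  have hL0 : ∀ c : Fin x × Fin 2 → ℂ, ∃ F : V,
      (∀ i, MvPolynomial.aeval (R i) F.val = c (i, 0)) ∧
      (∀ i, ∑ j, v i j * MvPolynomial.aeval (R i) (pderiv j F.val) = c (i, 1)) := by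
    intro c
    have hpair : ∀ i : Fin x, ∃ g : Fin (m + 1) → ℂ,
        (∑ j, R i j * g j = (m : ℂ) * c (i, 0)) ∧ (∑ j, v i j * g j = c (i, 1)) :=
      fun i => pair_surj (hR0 i) (hvR i) _ _
    choose g hg1 hg2 using hpair
    obtain ⟨F, hF⟩ := hΦsurj (fun q => g q.1 q.2)
    have hFg : ∀ i j, MvPolynomial.aeval (R i) (pderiv j F.val) = g i j := by
      intro i j
      have := congrFun hF (i, j)
      rwa [hΦapp] at this
    refine ⟨F, fun i => ?_, fun i => ?_⟩
    · have he := euler (R i) (hVhom F)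
      rw [Finset.sum_congr rfl (fun j _ => by rw [hFg i j]), hg1 i] at he
      exact mul_left_cancel₀ hm0 he
    · rw [Finset.sum_congr rfl (fun j _ => by rw [hFg i j])]
      exact hg2 i
  -- pick the basis-like family
  obtain ⟨F, hF0, hF1⟩ : ∃ F : (Fin x × Fin 2) → V,
      (∀ k i, MvPolynomial.aeval (R i) (F k).val
        = (Pi.single k 1 : Fin x × Fin 2 → ℂ) (i, 0)) ∧
      (∀ k i, ∑ j, v i j * MvPolynomial.aeval (R i) (pderiv j (F k).val)
        = (Pi.single k 1 : Fin x × Fin 2 → ℂ) (i, 1)) := by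
    choose F h1 h2 using fun k => hL0 (Pi.single k 1)
    exact ⟨F, fun k i => h1 k i, fun k i => h2 k i⟩
  -- polynomial matrix
  set φ : Fin x → Fin (m + 1) → Polynomial ℂ :=
    fun i j => Polynomial.C (R i j) + Polynomial.C (v i j) * Polynomial.X with hφdef
  set p : Fin x → (Fin x × Fin 2) → Polynomial ℂ :=
    fun i k => (MvPolynomial.aeval (φ i)) (F k).val with hpdef
  have hpeval : ∀ i k (s : ℂ),
      Polynomial.eval s (p i k) = MvPolynomial.aeval (fun j => R i j + v i j * s) (F k).val := by
    intro i k s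
    rw [hpdef, hφdef]
    exact eval_aeval_line _ _ _ s
  have hp0 : ∀ i k, (p i k).coeff 0 = MvPolynomial.aeval (R i) (F k).val := by
    intro i k
    rw [Polynomial.coeff_zero_eq_eval_zero, hpeval]
    simp
  set A : Matrix (Fin x × Fin 2) (Fin x × Fin 2) (Polynomial ℂ) :=
    Matrix.of (fun q k => if q.2 = 0 then Polynomial.C (MvPolynomial.aeval (R q.1) (F k).val)
      else (p q.1 k).divX) with hA
  have hAe0 : ∀ i k, A ((i, (0 : Fin 2))) k
      = Polynomial.C (MvPolynomial.aeval (R i) (F k).val) := by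
    intro i k
    rw [hA]
    norm_num
  have hAe1 : ∀ i k, A ((i, (1 : Fin 2))) k = (p i k).divX := by
    intro i k
    rw [hA]
    norm_num
  have hA0 : A.map (Polynomial.evalRingHom 0) = 1 := by
    ext q k
    rcases q with ⟨i, jq⟩
    rcases eq_or_ne jq 0 with rfl | hj
    · rw [Matrix.map_apply, hAe0, Polynomial.coe_evalRingHom, Polynomial.eval_C,
        hF0 k i, Matrix.one_apply, Pi.single_apply]
    · have hj1 : jq = 1 := by omega
      subst hj1
      rw [Matrix.map_apply, hAe1, Polynomial.coe_evalRingHom,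
        ← Polynomial.coeff_zero_eq_eval_zero, Polynomial.coeff_divX, hpdef, hφdef,
        coeff_one_aeval_line, hF1 k i, Matrix.one_apply, Pi.single_apply]
  have hdet0 : Polynomial.eval 0 A.det = 1 := by
    have := RingHom.map_det (Polynomial.evalRingHom 0) A
    rw [RingHom.mapMatrix_apply, hA0] at this
    simpa using this
  -- choose a good parameter t
  obtain ⟨t, ht0, hdt⟩ : ∃ t : ℂ, t ≠ 0 ∧ Polynomial.eval t A.det ≠ 0 := by
    have hd : A.det ≠ 0 := fun h => by simp [h] at hdet0
    have hXd : Polynomial.X * A.det ≠ 0 := mul_ne_zero Polynomial.X_ne_zero hd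
    obtain ⟨t, ht⟩ := (Polynomial.X * A.det).exists_eval_ne_zero_of_natDegree_lt_card hXd
      (lt_of_lt_of_le (Cardinal.nat_lt_aleph0 _) (Cardinal.aleph0_le_mk ℂ))
    rw [Polynomial.eval_mul, Polynomial.eval_X] at ht
    exact ⟨t, fun h => ht (by simp [h]), fun h => ht (by simp [h])⟩
  -- the evaluated matrix
  set M : Matrix (Fin x × Fin 2) (Fin x × Fin 2) ℂ := A.map (Polynomial.evalRingHom t) with hM
  have hMdet : IsUnit M.det := by
    rw [hM, ← RingHom.mapMatrix_apply, ← RingHom.map_det]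
    simpa using isUnit_iff_ne_zero.mpr hdt
  have hM0 : ∀ i k, M ((i, 0) : Fin x × Fin 2) k = MvPolynomial.aeval (R i) (F k).val := by
    intro i k
    rw [hM, Matrix.map_apply, hAe0, Polynomial.coe_evalRingHom, Polynomial.eval_C]
  have hM1 : ∀ i k, M ((i, 1) : Fin x × Fin 2) k = Polynomial.eval t ((p i k).divX) := by
    intro i k
    rw [hM, Matrix.map_apply, hAe1, Polynomial.coe_evalRingHom]
  have hsplit : ∀ i k, Polynomial.eval t (p i k)
      = MvPolynomial.aeval (R i) (F k).val + t * Polynomial.eval t ((p i k).divX) := by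
    intro i k
    conv_lhs => rw [← Polynomial.X_mul_divX_add (p i k)]
    rw [Polynomial.eval_add, Polynomial.eval_mul, Polynomial.eval_X, Polynomial.eval_C, hp0]
    ring
  -- the points
  set P : Fin x → Fin 2 → (Fin (m + 1) → ℂ) := fun i j => if j = 0 then R i else R i + t • v i
    with hPdef
  have hPeval : ∀ i k, MvPolynomial.aeval (P i 1) (F k).val
      = MvPolynomial.aeval (R i) (F k).val + t * Polynomial.eval t ((p i k).divX) := by
    intro i k
    rw [← hsplit i k, hpeval]
    have harg : P i 1 = fun j => R i j + v i j * t := by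
      funext j
      simp [hPdef]
      ring
    rw [harg]
  refine ⟨P, ?_, ?_, ?_⟩
  · intro i j
    by_cases h : j = 0 <;>
      simp [hPdef, h, Submodule.add_mem _ (hRW i) (Submodule.smul_mem _ _ (hvW i)), hRW i]
  · intro i j
    rcases eq_or_ne j 0 with rfl | h
    · simpa [hPdef] using hR0 i
    · have hPij : P i j = R i + t • v i := by simp [hPdef, h]
      rw [hPij]
      intro hz
      apply hvR i (-t⁻¹)
      have h2 : t • v i = -R i := eq_neg_of_add_eq_zero_right hz
      calc v i = (t⁻¹ * t) • v i := by rw [inv_mul_cancel₀ ht0, one_smul]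
      _ = t⁻¹ • (t • v i) := by rw [mul_smul]
      _ = t⁻¹ • (-R i) := by rw [h2]
      _ = (-t⁻¹) • R i := by module
  · -- the dimension count
    set Lt : V →ₗ[ℂ] ((Fin x × Fin 2) → ℂ) := LinearMap.pi (fun q =>
      (MvPolynomial.aeval (P q.1 q.2)).toLinearMap ∘ₗ V.subtype) with hLt
    have hLtapp : ∀ (G : V) q, Lt G q = MvPolynomial.aeval (P q.1 q.2) G.val := by
      intro G q
      simp [hLt]
    have hLtsurj : Function.Surjective Lt := by
      intro c
      set c' : (Fin x × Fin 2) → ℂ := fun q => if q.2 = 0 then c (q.1, 0)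
        else t⁻¹ * (c (q.1, 1) - c (q.1, 0)) with hc'
      set w : (Fin x × Fin 2) → ℂ := M⁻¹.mulVec c' with hw
      have hMw : M.mulVec w = c' := by
        rw [hw, Matrix.mulVec_mulVec, Matrix.mul_nonsing_inv _ hMdet, Matrix.one_mulVec]
      have hMw' : ∀ q, ∑ k, M q k * w k = c' q := by
        intro q
        rw [← hMw]
        rfl
      refine ⟨∑ k, w k • F k, ?_⟩
      have hLsum : ∀ q, Lt (∑ k, w k • F k) q
          = ∑ k, w k * MvPolynomial.aeval (P q.1 q.2) (F k).val := by
        intro q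
        rw [map_sum]
        rw [Finset.sum_apply]
        refine Finset.sum_congr rfl fun k _ => ?_
        rw [map_smul, Pi.smul_apply, hLtapp, smul_eq_mul]
      funext q
      rcases q with ⟨i, jq⟩
      rcases eq_or_ne jq 0 with rfl | hj
      · rw [hLsum]
        have : ∀ k, MvPolynomial.aeval (P i 0) (F k).val = M ((i, 0) : Fin x × Fin 2) k := by
          intro k
          rw [show P i 0 = R i from by simp [hPdef], hM0]
        rw [Finset.sum_congr rfl (fun k _ => by rw [this k, mul_comm]), hMw' (i, 0), hc']
        norm_num
      · have hj1 : jq = 1 := by omega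
        subst hj1
        rw [hLsum]
        have hterm : ∀ k, w k * MvPolynomial.aeval (P i 1) (F k).val
            = w k * M ((i, 0) : Fin x × Fin 2) k + t * (M ((i, 1) : Fin x × Fin 2) k * w k) := by
          intro k
          rw [hPeval, hM0, hM1]
          ring
        rw [Finset.sum_congr rfl (fun k _ => hterm k), Finset.sum_add_distrib]
        rw [show (∑ k, w k * M ((i, 0) : Fin x × Fin 2) k) = c' (i, 0) from by
          rw [← hMw' (i, 0)]; exact Finset.sum_congr rfl fun k _ => mul_comm _ _]
        rw [show (∑ k, t * (M ((i, 1) : Fin x × Fin 2) k * w k)) = t * c' (i, 1) from by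
          rw [← Finset.mul_sum, hMw' (i, 1)]]
        have hc0 : c' ((i, 0) : Fin x × Fin 2) = c (i, 0) := by rw [hc']; norm_num
        have hc1 : c' ((i, 1) : Fin x × Fin 2) = t⁻¹ * (c (i, 1) - c (i, 0)) := by
          rw [hc']
          norm_num
        rw [hc0, hc1]
        field_simp
        ring
    have hkerLt : LinearMap.ker Lt
        = Submodule.comap V.subtype (⨅ i, ⨅ j, vanishingSubmodule (P i j) 1) := by
      ext G
      simp only [LinearMap.mem_ker, Submodule.mem_comap, Submodule.mem_iInf]
      constructor
      · intro h i j
        rw [mem_vanishing_one]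
        have := congrFun h (i, j)
        rwa [hLtapp] at this
      · intro h
        funext q
        rw [hLtapp]
        exact (mem_vanishing_one _ _).mp (h q.1 q.2)
    -- rank-nullity
    have hrank := LinearMap.finrank_range_add_finrank_ker Lt
    rw [LinearMap.range_eq_top.mpr hLtsurj] at hrank
    have htop : Module.finrank ℂ (⊤ : Submodule ℂ ((Fin x × Fin 2) → ℂ)) = 2 * x := by
      rw [finrank_top, Module.finrank_pi]
      simp [Fintype.card_prod]
      ring
    rw [htop, hkerLt] at hrank
    rw [finrank_comap_inf] at hrank
    have hfin : Module.finrank ℂ ↥(V ⊓ ⨅ i, ⨅ j, vanishingSubmodule (P i j) 1) + 2 * x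
        = Module.finrank ℂ V := by omega
    push_cast [← hfin]
    ring
end

section
/- Let m ≥ 3 and let Q_1,…,Q_m ∈ ℂ^{m+1} be any m linearly independent vectors. Then the ℂ-vector space of forms of degree m in m+1 variables vanishing to order ≥ m−1 at each of the m points [Q_i] has dimension exactly 2^m. -/
open MvPolynomial

lemma derivMap_nil {N : ℕ} : derivMap (N := N) [] = LinearMap.id := rfl

lemma derivMap_cons {N : ℕ} (j : Fin N) (l : List (Fin N)) (p : MvPolynomial (Fin N) ℂ) :
    derivMap (j :: l) p = pderiv j (derivMap l p) := rfl

noncomputable def listCount {N : ℕ} (l : List (Fin N)) : Fin N →₀ ℕ :=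
  Multiset.toFinsupp (l : Multiset (Fin N))

lemma listCount_apply {N : ℕ} (l : List (Fin N)) (k : Fin N) :
    listCount l k = l.count k := by simp [listCount]

lemma listCount_cons {N : ℕ} (j : Fin N) (l : List (Fin N)) :
    listCount (j :: l) = Finsupp.single j 1 + listCount l := by
  ext k
  rw [Finsupp.add_apply, listCount_apply, listCount_apply, Finsupp.single_apply,
    List.count_cons]
  rcases eq_or_ne k j with h | h <;> simp [h, add_comm]

lemma derivMap_monomial {N : ℕ} (l : List (Fin N)) (γ : Fin N →₀ ℕ) (c : ℂ) :
    derivMap l (monomial γ c) =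
      monomial (γ - listCount l) (c * (∏ k, (γ k).descFactorial (listCount l k) : ℕ)) := by
  induction l with
  | nil => simp [derivMap_nil, listCount]
  | cons j l ih =>
    rw [derivMap_cons, ih, pderiv_monomial, listCount_cons]
    have he : γ - listCount l - Finsupp.single j 1
        = γ - ((Finsupp.single j 1 : Fin N →₀ ℕ) + listCount l) := by
      ext k
      rw [Finsupp.tsub_apply, Finsupp.tsub_apply, Finsupp.tsub_apply, Finsupp.add_apply]
      omega
    rw [he]
    congr 1
    · rw [← Finset.prod_erase_mul Finset.univ _ (Finset.mem_univ j),
        ← Finset.prod_erase_mul Finset.univ _ (Finset.mem_univ j)]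
      have h1 : ∀ k ∈ Finset.univ.erase j,
          (γ k).descFactorial (((Finsupp.single j 1 : Fin N →₀ ℕ) + listCount l) k)
            = (γ k).descFactorial (listCount l k) := by
        intro k hk
        rw [Finsupp.add_apply, Finsupp.single_apply, if_neg (Ne.symm (Finset.mem_erase.mp hk).1),
          zero_add]
      rw [Finset.prod_congr rfl h1]
      have h2 : ((Finsupp.single j 1 : Fin N →₀ ℕ) + listCount l) j = listCount l j + 1 := by
        rw [Finsupp.add_apply, Finsupp.single_apply, if_pos rfl]; omega
      have h3 : (γ - listCount l) j = γ j - listCount l j := Finsupp.tsub_apply _ _ _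
      rw [h2, Nat.descFactorial_succ, h3]
      push_cast
      ring

lemma sum_listCount {N : ℕ} (l : List (Fin N)) : ∑ k, listCount l k = l.length := by
  simp only [listCount_apply]
  induction l with
  | nil => simp
  | cons j l ih =>
    simp only [List.count_cons, List.length_cons]
    rw [Finset.sum_add_distrib, ih]
    simp [Finset.sum_ite_eq]

lemma mem_vanishing_iff {N : ℕ} (a : Fin N → ℂ) (k : ℕ) (p : MvPolynomial (Fin N) ℂ) :
    p ∈ vanishingSubmodule a k ↔
      ∀ l : List (Fin N), l.length < k → aeval a (derivMap l p) = 0 := by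
  simp [vanishingSubmodule, Submodule.mem_iInf, LinearMap.mem_ker]

lemma aeval_single_monomial {N : ℕ} (t : Fin N) (β : Fin N →₀ ℕ) (c : ℂ) :
    aeval (Pi.single t (1:ℂ)) (monomial β c)
      = if ∀ j, j ≠ t → β j = 0 then c else 0 := by
  rw [aeval_monomial]
  by_cases h : ∀ j, j ≠ t → β j = 0
  · rw [if_pos h]
    have : β.prod (fun (n : Fin N) (e : ℕ) => ((Pi.single t (1:ℂ) : Fin N → ℂ) n) ^ e) = 1 := by
      apply Finset.prod_eq_one
      intro j hj
      rw [Finsupp.mem_support_iff] at hj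
      rcases eq_or_ne j t with rfl | hne
      · simp
      · rw [h j hne]; simp
    rw [this]; simp
  · rw [if_neg h]
    push_neg at h
    obtain ⟨j, hjt, hj⟩ := h
    have : β.prod (fun (n : Fin N) (e : ℕ) => ((Pi.single t (1:ℂ) : Fin N → ℂ) n) ^ e) = 0 := by
      apply Finset.prod_eq_zero (i := j)
      · rwa [Finsupp.mem_support_iff]
      · show ((Pi.single t (1:ℂ) : Fin N → ℂ) j) ^ (β j) = 0
        rw [Pi.single_eq_of_ne hjt, zero_pow hj]
    rw [this]; simp

/-- Sufficiency: if every monomial of `p` has degree off `t` at least `k`,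
then `p` vanishes to order `≥ k` at the `t`-th coordinate point. -/
lemma mem_vanishing_of_offdeg {N : ℕ} (t : Fin N) (k : ℕ) (p : MvPolynomial (Fin N) ℂ)
    (h : ∀ α ∈ p.support, k ≤ ∑ j ∈ Finset.univ.erase t, α j) :
    p ∈ vanishingSubmodule (Pi.single t 1) k := by
  rw [mem_vanishing_iff]
  intro l hl
  conv_lhs => rw [p.as_sum]
  rw [map_sum, map_sum]
  apply Finset.sum_eq_zero
  intro α hα
  rw [derivMap_monomial, aeval_single_monomial, if_neg]
  intro hcon
  have h1 : ∑ j ∈ Finset.univ.erase t, α j ≤ ∑ j ∈ Finset.univ.erase t, listCount l j := by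
    apply Finset.sum_le_sum
    intro j hj
    have := hcon j (Finset.mem_erase.mp hj).1
    rw [Finsupp.tsub_apply] at this
    omega
  have h2 : ∑ j ∈ Finset.univ.erase t, listCount l j ≤ ∑ j, listCount l j :=
    Finset.sum_le_sum_of_subset (Finset.subset_univ _)
  rw [sum_listCount] at h2
  have := h α hα
  omega

lemma degree_eq_sum_univ {N : ℕ} (α : Fin N →₀ ℕ) : α.degree = ∑ j, α j := by
  rw [Finsupp.degree]
  exact Finset.sum_subset (Finset.subset_univ _)
    (fun x _ hx => by rwa [← Finsupp.notMem_support_iff])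

/-- Necessity: a homogeneous `p` of degree `d` vanishing to order `≥ k` at the `t`-th
coordinate point has all exponents of `X t` at most `d - k`. -/
lemma exponent_le_of_mem_vanishing {N : ℕ} (t : Fin N) (k d : ℕ)
    (p : MvPolynomial (Fin N) ℂ) (hp : p.IsHomogeneous d)
    (h : p ∈ vanishingSubmodule (Pi.single t 1) k) :
    ∀ α ∈ p.support, α t + k ≤ d := by
  intro α hα
  by_contra hcon
  -- the degree of α is d
  have hdeg : ∀ γ ∈ p.support, ∑ j, γ j = d := by
    intro γ hγ
    have hw := hp (mem_support_iff.mp hγ)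
    rw [← degree_eq_sum_univ, Finsupp.degree_eq_weight_one]
    exact hw
  set β : Fin N →₀ ℕ := α.erase t with hβ
  have hβapp : ∀ j, β j = if j = t then 0 else α j := by
    intro j
    rcases eq_or_ne j t with rfl | hne
    · simp [hβ]
    · simp [hβ, hne]
  set l : List (Fin N) := (Finsupp.toMultiset β).toList with hldef
  have hlc : listCount l = β := by
    ext j
    rw [listCount_apply, hldef]
    rw [← Multiset.coe_count, Multiset.coe_toList, Finsupp.count_toMultiset]
  have hlen : l.length + α t = d := by
    have hsc := sum_listCount l
    rw [hlc] at hsc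
    have h1 : ∑ j ∈ Finset.univ.erase t, β j + β t = ∑ j, β j :=
      Finset.sum_erase_add _ _ (Finset.mem_univ t)
    have h2 : ∑ j ∈ Finset.univ.erase t, β j = ∑ j ∈ Finset.univ.erase t, α j :=
      Finset.sum_congr rfl (fun j hj => by rw [hβapp j, if_neg (Finset.mem_erase.mp hj).1])
    have h3 : ∑ j ∈ Finset.univ.erase t, α j + α t = ∑ j, α j :=
      Finset.sum_erase_add _ _ (Finset.mem_univ t)
    have h4 : β t = 0 := by rw [hβapp, if_pos rfl]
    have h5 := hdeg α hα
    omega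
  have hlt : l.length < k := by omega
  have h0 := (mem_vanishing_iff _ _ _).mp h l hlt
  rw [p.as_sum, map_sum, map_sum] at h0
  rw [Finset.sum_eq_single α (fun γ hγ hne => ?_) (fun hns => absurd hα hns)] at h0
  · -- the term at α is nonzero, contradiction
    rw [derivMap_monomial, aeval_single_monomial, hlc, if_pos ?_] at h0
    · have hc : coeff α p ≠ 0 := mem_support_iff.mp hα
      have hprod : (∏ j, (α j).descFactorial (β j)) ≠ 0 := by
        apply Finset.prod_ne_zero_iff.mpr
        intro j _
        rw [Ne, Nat.descFactorial_eq_zero_iff_lt, not_lt]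
        rw [hβapp]
        split <;> omega
      exact hprod (by exact_mod_cast (mul_eq_zero.mp h0).resolve_left hc)
    · intro j hj
      rw [Finsupp.tsub_apply, hβapp, if_neg hj, Nat.sub_self]
  · -- terms at γ ≠ α vanish
    rw [derivMap_monomial, aeval_single_monomial, hlc]
    split
    · rename_i hall
      have : (∏ j, (γ j).descFactorial (β j)) = 0 := by
        by_contra hne0
        apply hne
        have hle : ∀ j, β j ≤ γ j := by
          intro j
          have := Finset.prod_ne_zero_iff.mp hne0 j (Finset.mem_univ j)
          rw [Ne, Nat.descFactorial_eq_zero_iff_lt, not_lt] at this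
          exact this
        have heq : ∀ j, j ≠ t → γ j = α j := by
          intro j hj
          have h6 := hall j hj
          rw [Finsupp.tsub_apply] at h6
          have h7 := hle j
          have h8 := hβapp j
          rw [if_neg hj] at h8
          omega
        have hsumγ := hdeg γ hγ
        have hsumα := hdeg α hα
        have h9 : ∑ j ∈ Finset.univ.erase t, γ j = ∑ j ∈ Finset.univ.erase t, α j :=
          Finset.sum_congr rfl (fun j hj => heq j (Finset.mem_erase.mp hj).1)
        have h10 : ∑ j ∈ Finset.univ.erase t, γ j + γ t = ∑ j, γ j :=
          Finset.sum_erase_add _ _ (Finset.mem_univ t)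
        have h11 : ∑ j ∈ Finset.univ.erase t, α j + α t = ∑ j, α j :=
          Finset.sum_erase_add _ _ (Finset.mem_univ t)
        ext j
        rcases eq_or_ne j t with rfl | hj
        · omega
        · exact heq j hj
      rw [this]
      push_cast
      ring
    · rfl

lemma derivMap_cons' {N : ℕ} (j : Fin N) (l : List (Fin N)) (p : MvPolynomial (Fin N) ℂ) :
    derivMap (j :: l) p = pderiv j (derivMap l p) := rfl

lemma pderiv_comm {N : ℕ} (i j : Fin N) (p : MvPolynomial (Fin N) ℂ) :
    pderiv i (pderiv j p) = pderiv j (pderiv i p) := by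
  induction p using MvPolynomial.induction_on' with
  | monomial s a =>
    rw [pderiv_monomial, pderiv_monomial, pderiv_monomial, pderiv_monomial]
    rcases eq_or_ne i j with rfl | hij
    · rfl
    · have e1 : s - Finsupp.single j 1 - Finsupp.single i 1
          = s - Finsupp.single i 1 - Finsupp.single j 1 := by
        ext k
        simp only [Finsupp.tsub_apply, Finsupp.single_apply]
        omega
      have e2 : (s - (Finsupp.single j 1 : Fin N →₀ ℕ)) i = s i := by
        rw [Finsupp.tsub_apply, Finsupp.single_apply, if_neg (fun h => hij h.symm)]
        omega
      have e3 : (s - (Finsupp.single i 1 : Fin N →₀ ℕ)) j = s j := by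
        rw [Finsupp.tsub_apply, Finsupp.single_apply, if_neg hij]
        omega
      rw [e1, e2, e3]
      ring_nf
  | add p q hp hq => simp [hp, hq]

lemma pderiv_derivMap {N : ℕ} (j : Fin N) (l : List (Fin N)) (p : MvPolynomial (Fin N) ℂ) :
    pderiv j (derivMap l p) = derivMap l (pderiv j p) := by
  induction l with
  | nil => rfl
  | cons i l ih => rw [derivMap_cons', derivMap_cons', pderiv_comm, ih]

lemma mem_vanishing_succ {N : ℕ} (a : Fin N → ℂ) (k : ℕ) (p : MvPolynomial (Fin N) ℂ) :
    p ∈ vanishingSubmodule a (k + 1) ↔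
      aeval a p = 0 ∧ ∀ j, pderiv j p ∈ vanishingSubmodule a k := by
  simp only [mem_vanishing_iff]
  constructor
  · intro h
    refine ⟨h [] (Nat.succ_pos k), fun j l hl => ?_⟩
    have := h (j :: l) (by simpa using Nat.succ_lt_succ hl)
    rwa [derivMap_cons', pderiv_derivMap] at this
  · rintro ⟨h0, h1⟩ l hl
    match l with
    | [] => exact h0
    | j :: l' =>
      rw [derivMap_cons', pderiv_derivMap]
      exact h1 j l' (by simpa using Nat.lt_of_succ_lt_succ hl)

variable {N : ℕ} (U : (Fin N → ℂ) →ₗ[ℂ] (Fin N → ℂ))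

noncomputable def substU : MvPolynomial (Fin N) ℂ →ₐ[ℂ] MvPolynomial (Fin N) ℂ :=
  aeval (fun r => ∑ s, C (U (Pi.single s 1) r) * X s)

lemma aeval_substU (b : Fin N → ℂ) (p : MvPolynomial (Fin N) ℂ) :
    aeval b (substU U p) = aeval (U b) p := by
  rw [substU]
  show (aeval b) ((aeval fun r => ∑ s, C (U (Pi.single s 1) r) * X s) p) = _
  rw [comp_aeval_apply]
  have harg : (fun r => (aeval b) (∑ s, C (U (Pi.single s 1) r) * X s)) = U b := by
    funext r
    rw [map_sum]
    have hb : U b = ∑ s, b s • U (Pi.single s 1) := by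
      conv_lhs => rw [pi_eq_sum_univ b]
      rw [map_sum]
      refine Finset.sum_congr rfl (fun s _ => ?_)
      rw [← map_smul]
      congr 1
      ext j
      simp only [Pi.smul_apply, Pi.single_apply, smul_eq_mul]
      rcases eq_or_ne s j with rfl | h
      · simp
      · simp [h, Ne.symm h]
    rw [hb, Finset.sum_apply]
    refine Finset.sum_congr rfl (fun s _ => ?_)
    simp [mul_comm]
  rw [harg]

lemma substU_X (i : Fin N) :
    substU U (X i) = ∑ s, C (U (Pi.single s 1) i) * X s := aeval_X _ i

lemma pderiv_substU (j : Fin N) (p : MvPolynomial (Fin N) ℂ) :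
    pderiv j (substU U p) = ∑ r, substU U (pderiv r p) * C (U (Pi.single j 1) r) := by
  induction p using MvPolynomial.induction_on with
  | C a => simp [substU]
  | add p q hp hq =>
    rw [map_add, map_add, hp, hq, ← Finset.sum_add_distrib]
    refine Finset.sum_congr rfl (fun r _ => ?_)
    rw [map_add, map_add, add_mul]
  | mul_X p i hp =>
    rw [map_mul, pderiv_mul, hp, substU_X]
    have hL : pderiv j (∑ s, C (U (Pi.single s 1) i) * X s) = C (U (Pi.single j 1) i) := by
      rw [map_sum]
      rw [Finset.sum_eq_single j]
      · rw [pderiv_C_mul, pderiv_X_self, mul_one]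
      · intro s _ hs
        rw [pderiv_C_mul, pderiv_X_of_ne hs, mul_zero]
      · intro hj; exact absurd (Finset.mem_univ j) hj
    rw [hL]
    have hR : ∀ r : Fin N, substU U (pderiv r (p * X i)) * C (U (Pi.single j 1) r)
        = substU U (pderiv r p) * C (U (Pi.single j 1) r) * (∑ s, C (U (Pi.single s 1) i) * X s)
          + (if r = i then substU U p * C (U (Pi.single j 1) i) else 0) := by
      intro r
      rw [pderiv_mul]
      rcases eq_or_ne r i with rfl | hri
      · rw [pderiv_X_self, if_pos rfl, mul_one, map_add, map_mul, substU_X, add_mul]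
        ring
      · rw [pderiv_X_of_ne (Ne.symm hri), if_neg hri, mul_zero, add_zero, map_mul, substU_X,
          add_zero]
        ring
    rw [Finset.sum_congr rfl (fun r _ => hR r), Finset.sum_add_distrib,
      Finset.sum_ite_eq' Finset.univ i (fun _ => substU U p * C (U (Pi.single j 1) i)),
      if_pos (Finset.mem_univ i), ← Finset.sum_mul]

lemma substU_mem_vanishing (b : Fin N → ℂ) (k : ℕ) (p : MvPolynomial (Fin N) ℂ)
    (h : p ∈ vanishingSubmodule (U b) k) :
    substU U p ∈ vanishingSubmodule b k := by
  induction k generalizing p with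
  | zero =>
    rw [mem_vanishing_iff]
    intro l hl
    exact absurd hl (Nat.not_lt_zero _)
  | succ k ih =>
    rw [mem_vanishing_succ] at h ⊢
    obtain ⟨h0, h1⟩ := h
    refine ⟨by rw [aeval_substU]; exact h0, fun j => ?_⟩
    rw [pderiv_substU]
    apply Submodule.sum_mem
    intro r _
    have hmem := ih (pderiv r p) (h1 r)
    have := Submodule.smul_mem (vanishingSubmodule b k) (U (Pi.single j 1) r) hmem
    rwa [smul_eq_C_mul, mul_comm] at this

lemma substU_isHomogeneous (d : ℕ) (p : MvPolynomial (Fin N) ℂ) (hp : p.IsHomogeneous d) :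
    (substU U p).IsHomogeneous d := by
  have hg : ∀ r : Fin N, (∑ s, C (U (Pi.single s 1) r) * X s).IsHomogeneous 1 := by
    intro r
    apply MvPolynomial.IsHomogeneous.sum
    intro s _
    exact isHomogeneous_C_mul_X _ _
  have := hp.aeval (fun r => ∑ s, C (U (Pi.single s 1) r) * X s) hg
  rwa [one_mul] at this

lemma apply_pi_single_sum (V : (Fin N → ℂ) →ₗ[ℂ] (Fin N → ℂ)) (t i : Fin N) :
    V (U (Pi.single t 1)) i = ∑ s, U (Pi.single t 1) s * V (Pi.single s 1) i := by
  have hb : U (Pi.single t 1) = ∑ s, U (Pi.single t 1) s • (Pi.single s 1 : Fin N → ℂ) := by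
    conv_lhs => rw [pi_eq_sum_univ (U (Pi.single t 1))]
    refine Finset.sum_congr rfl (fun s _ => ?_)
    congr 1
    ext j
    simp only [Pi.single_apply]
    rcases eq_or_ne s j with rfl | h
    · simp
    · simp [h, Ne.symm h]
  conv_lhs => rw [hb, map_sum]
  rw [Finset.sum_apply]
  refine Finset.sum_congr rfl (fun s _ => ?_)
  rw [map_smul]
  simp

lemma substU_comp_apply (V : (Fin N → ℂ) →ₗ[ℂ] (Fin N → ℂ)) (p : MvPolynomial (Fin N) ℂ) :
    substU U (substU V p) = substU (V ∘ₗ U) p := by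
  have hX : ∀ i, substU U (substU V (X i)) = substU (V ∘ₗ U) (X i) := by
    intro i
    rw [substU_X, map_sum, substU_X]
    have h1 : ∀ s : Fin N, substU U (C (V (Pi.single s 1) i) * X s)
        = ∑ t, C (U (Pi.single t 1) s * V (Pi.single s 1) i) * X t := by
      intro s
      rw [map_mul, substU_X, Finset.mul_sum]
      have hC : substU U (C (V (Pi.single s 1) i)) = C (V (Pi.single s 1) i) := by
        rw [substU]
        exact aeval_C _ _
      rw [hC]
      refine Finset.sum_congr rfl (fun t _ => ?_)
      rw [← mul_assoc, ← C_mul, mul_comm (V (Pi.single s 1) i)]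
    rw [Finset.sum_congr rfl (fun s _ => h1 s), Finset.sum_comm]
    refine Finset.sum_congr rfl (fun t _ => ?_)
    rw [← Finset.sum_mul]
    congr 1
    rw [← map_sum C]
    congr 1
    rw [LinearMap.comp_apply, apply_pi_single_sum U V t i]
  have hcomp : (substU U).comp (substU V) = substU (V ∘ₗ U) :=
    MvPolynomial.algHom_ext hX
  exact AlgHom.congr_fun hcomp p

section Count
variable (m : ℕ)

/-- Exponent vector attached to a subset `T ⊆ Fin m`. -/
noncomputable def expOf (T : Finset (Fin m)) : Fin (m + 1) →₀ ℕ :=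
  Finsupp.equivFunOnFinite.symm
    (Fin.cases (m - T.card) (fun i => if i ∈ T then 1 else 0))

lemma expOf_zero (T : Finset (Fin m)) : expOf m T 0 = m - T.card := rfl

lemma expOf_succ (T : Finset (Fin m)) (i : Fin m) :
    expOf m T i.succ = if i ∈ T then 1 else 0 := by
  simp [expOf]

lemma sum_ite_mem_card (T : Finset (Fin m)) :
    ∑ i : Fin m, (if i ∈ T then 1 else 0) = T.card := by
  rw [Finset.sum_ite_mem, Finset.univ_inter, Finset.card_eq_sum_ones]

lemma expOf_sum (T : Finset (Fin m)) : ∑ j, expOf m T j = m := by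
  rw [Fin.sum_univ_succ]
  have h1 : ∀ i : Fin m, expOf m T i.succ = if i ∈ T then 1 else 0 := expOf_succ m T
  rw [Finset.sum_congr rfl (fun i _ => h1 i), sum_ite_mem_card, expOf_zero]
  have : T.card ≤ m := by
    have := Finset.card_le_univ T
    simpa using this
  omega

lemma expOf_injective : Function.Injective (expOf m) := by
  intro T T' h
  ext i
  have := congrArg (fun f => f i.succ) h
  simp only [expOf_succ] at this
  by_cases hT : i ∈ T <;> by_cases hT' : i ∈ T' <;> simp_all

/-- The monomial family indexed by subsets. -/
noncomputable def monFam (T : Finset (Fin m)) : MvPolynomial (Fin (m + 1)) ℂ :=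
  monomial (expOf m T) 1

lemma monFam_isHomogeneous (T : Finset (Fin m)) : (monFam m T).IsHomogeneous m :=
  isHomogeneous_monomial 1 (by rw [degree_eq_sum_univ, expOf_sum])

lemma monFam_mem_vanishing (T : Finset (Fin m)) (i : Fin m) :
    monFam m T ∈ vanishingSubmodule (Pi.single i.succ 1) (m - 1) := by
  apply mem_vanishing_of_offdeg
  intro α hα
  rw [monFam, support_monomial, if_neg (one_ne_zero)] at hα
  rw [Finset.mem_singleton] at hα
  subst hα
  have h1 : ∑ j ∈ Finset.univ.erase i.succ, expOf m T j + expOf m T i.succ = m := by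
    rw [Finset.sum_erase_add _ _ (Finset.mem_univ i.succ), expOf_sum]
  have h2 : expOf m T i.succ ≤ 1 := by
    rw [expOf_succ]; split <;> omega
  omega

lemma monFam_linearIndependent : LinearIndependent ℂ (monFam m) := by
  have h : monFam m = (fun s => monomial s (1:ℂ)) ∘ expOf m := rfl
  rw [h, ← coe_basisMonomials]
  exact (basisMonomials (Fin (m+1)) ℂ).linearIndependent.comp _ (expOf_injective m)

/-- The standard submodule. -/
noncomputable def W0 : Submodule ℂ (MvPolynomial (Fin (m + 1)) ℂ) :=
  homogeneousSubmodule (Fin (m + 1)) ℂ m ⊓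
    ⨅ i : Fin m, vanishingSubmodule (Pi.single i.succ 1) (m - 1)

lemma monFam_mem_W0 (T : Finset (Fin m)) : monFam m T ∈ W0 m := by
  refine Submodule.mem_inf.mpr ⟨monFam_isHomogeneous m T, ?_⟩
  exact Submodule.mem_iInf _ |>.mpr (fun i => monFam_mem_vanishing m T i)

lemma W0_eq_span (hm : 1 ≤ m) : W0 m = Submodule.span ℂ (Set.range (monFam m)) := by
  apply le_antisymm
  · intro p hp
    obtain ⟨hph, hpv⟩ := Submodule.mem_inf.mp hp
    rw [mem_homogeneousSubmodule] at hph
    have hpv' : ∀ i : Fin m, p ∈ vanishingSubmodule (Pi.single i.succ 1) (m - 1) :=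
      fun i => (Submodule.mem_iInf _).mp hpv i
    nth_rewrite 1 [p.as_sum]
    apply Submodule.sum_mem
    intro α hα
    -- identify α with expOf m T
    have hsum : ∑ j, α j = m := by
      have hw := hph (mem_support_iff.mp hα)
      rw [← degree_eq_sum_univ, Finsupp.degree_eq_weight_one]
      exact hw
    have hle : ∀ i : Fin m, α i.succ ≤ 1 := by
      intro i
      have := exponent_le_of_mem_vanishing i.succ (m - 1) m p hph (hpv' i) α hα
      omega
    set T : Finset (Fin m) := Finset.univ.filter (fun i => α i.succ = 1) with hT
    have hTmem : ∀ i : Fin m, i ∈ T ↔ α i.succ = 1 := by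
      intro i; simp [hT]
    have hTcard : T.card = ∑ i : Fin m, α i.succ := by
      rw [← sum_ite_mem_card]
      refine Finset.sum_congr rfl (fun i _ => ?_)
      by_cases hi : i ∈ T
      · rw [if_pos hi, (hTmem i).mp hi]
      · rw [if_neg hi]
        have h1 := hle i
        have h2 : ¬ α i.succ = 1 := fun h => hi ((hTmem i).mpr h)
        omega
    have hid : α = expOf m T := by
      ext j
      induction j using Fin.cases with
      | zero =>
        rw [expOf_zero]
        have h3 : ∑ j, α j = α 0 + ∑ i : Fin m, α i.succ := Fin.sum_univ_succ _
        rw [h3] at hsum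
        omega
      | succ i =>
        rw [expOf_succ]
        by_cases hi : i ∈ T
        · rw [if_pos hi]; exact (hTmem i).mp hi
        · rw [if_neg hi]
          have h1 := hle i
          have h2 : ¬ α i.succ = 1 := fun h => hi ((hTmem i).mpr h)
          omega
    have : monomial α (coeff α p) = coeff α p • monFam m T := by
      rw [monFam, smul_monomial, smul_eq_mul, mul_one, hid]
    rw [this]
    exact Submodule.smul_mem _ _ (Submodule.subset_span ⟨T, rfl⟩)
  · rw [Submodule.span_le]
    rintro _ ⟨T, rfl⟩
    exact monFam_mem_W0 m T
end Count

lemma finrank_W0 (m : ℕ) (hm : 1 ≤ m) : Module.finrank ℂ (W0 m) = 2 ^ m := by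
  rw [W0_eq_span m hm, finrank_span_eq_card (monFam_linearIndependent m),
    Fintype.card_finset, Fintype.card_fin]

lemma substU_id {N : ℕ} (p : MvPolynomial (Fin N) ℂ) : substU LinearMap.id p = p := by
  have hX : ∀ i : Fin N, substU LinearMap.id (X i) = X i := by
    intro i
    rw [substU_X]
    rw [Finset.sum_eq_single i]
    · simp
    · intro s _ hs
      rw [LinearMap.id_apply, Pi.single_eq_of_ne (Ne.symm hs)]
      simp
    · intro h; exact absurd (Finset.mem_univ i) h
  have : (substU (LinearMap.id : (Fin N → ℂ) →ₗ[ℂ] (Fin N → ℂ))) = AlgHom.id ℂ _ :=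
    MvPolynomial.algHom_ext (fun i => hX i)
  rw [this]; rfl

theorem stmt8 (m : ℕ) (hm : 3 ≤ m)
    (Q : Fin m → (Fin (m + 1) → ℂ)) (hQ : LinearIndependent ℂ Q) :
    Module.finrank ℂ
      ↥(homogeneousSubmodule (Fin (m + 1)) ℂ m ⊓
        ⨅ i, vanishingSubmodule (Q i) (m - 1)) = 2 ^ m := by
  classical
  -- extend Q to a basis
  have hfr : Module.finrank ℂ (Fin (m + 1) → ℂ) = m + 1 := by
    rw [Module.finrank_pi, Fintype.card_fin]
  have hne : Submodule.span ℂ (Set.range Q) ≠ ⊤ := by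
    intro h
    have h1 : Module.finrank ℂ ↥(Submodule.span ℂ (Set.range Q)) = m := by
      rw [finrank_span_eq_card hQ, Fintype.card_fin]
    rw [h, finrank_top, hfr] at h1
    omega
  obtain ⟨v, hv⟩ : ∃ v, v ∉ Submodule.span ℂ (Set.range Q) := by
    by_contra hcon
    push_neg at hcon
    exact hne (Submodule.eq_top_iff'.mpr hcon)
  have hli : LinearIndependent ℂ (Fin.cons v Q : Fin (m + 1) → (Fin (m + 1) → ℂ)) :=
    linearIndependent_fin_cons.mpr ⟨hQ, hv⟩
  have hcard : Fintype.card (Fin (m + 1)) = Module.finrank ℂ (Fin (m + 1) → ℂ) := by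
    rw [hfr, Fintype.card_fin]
  let B := basisOfLinearIndependentOfCardEqFinrank hli hcard
  have hB : ∀ j : Fin (m + 1), B j = (Fin.cons v Q : Fin (m + 1) → (Fin (m + 1) → ℂ)) j :=
    fun j => congrFun (coe_basisOfLinearIndependentOfCardEqFinrank hli hcard) j
  let T := B.equivFun
  have hTQ : ∀ i : Fin m, T (Q i) = Pi.single i.succ 1 := by
    intro i
    have hBi : B i.succ = Q i := by rw [hB i.succ, Fin.cons_succ]
    funext j
    rw [← hBi]
    show B.equivFun (B i.succ) j = _
    rw [Module.Basis.equivFun_self, Pi.single_apply]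
    rcases eq_or_ne i.succ j with rfl | h
    · simp
    · rw [if_neg h, if_neg (Ne.symm h)]
  have hTQ' : ∀ i : Fin m, T.symm (Pi.single i.succ 1) = Q i := by
    intro i
    rw [← hTQ i, LinearEquiv.symm_apply_apply]
  set U : (Fin (m+1) → ℂ) →ₗ[ℂ] (Fin (m+1) → ℂ) := T.toLinearMap with hU
  set U' : (Fin (m+1) → ℂ) →ₗ[ℂ] (Fin (m+1) → ℂ) := T.symm.toLinearMap with hU'
  have hΦΦ' : ∀ p, substU U (substU U' p) = p := by
    intro p
    rw [substU_comp_apply]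
    have : U' ∘ₗ U = LinearMap.id := by
      ext x
      simp [hU, hU']
    rw [this, substU_id]
  have hΦ'Φ : ∀ p, substU U' (substU U p) = p := by
    intro p
    rw [substU_comp_apply]
    have : U ∘ₗ U' = LinearMap.id := by
      ext x
      simp [hU, hU']
    rw [this, substU_id]
  let e : MvPolynomial (Fin (m+1)) ℂ ≃ₗ[ℂ] MvPolynomial (Fin (m+1)) ℂ :=
    LinearEquiv.ofLinear (substU U).toLinearMap (substU U').toLinearMap
      (LinearMap.ext hΦΦ') (LinearMap.ext hΦ'Φ)
  have hmap : Submodule.map (e : MvPolynomial (Fin (m+1)) ℂ →ₗ[ℂ] MvPolynomial (Fin (m+1)) ℂ)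
      (W0 m) = homogeneousSubmodule (Fin (m + 1)) ℂ m ⊓ ⨅ i, vanishingSubmodule (Q i) (m - 1) := by
    apply le_antisymm
    · rintro _ ⟨p, hp, rfl⟩
      obtain ⟨hp1, hp2⟩ := Submodule.mem_inf.mp hp
      refine Submodule.mem_inf.mpr ⟨?_, ?_⟩
      · exact substU_isHomogeneous U m p hp1
      · refine (Submodule.mem_iInf _).mpr (fun i => ?_)
        have hmem : p ∈ vanishingSubmodule (U (Q i)) (m - 1) := by
          have := (Submodule.mem_iInf _).mp hp2 i
          rwa [show U (Q i) = Pi.single i.succ 1 from hTQ i]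
        exact substU_mem_vanishing U (Q i) (m - 1) p hmem
    · intro q hq
      obtain ⟨hq1, hq2⟩ := Submodule.mem_inf.mp hq
      refine Submodule.mem_map.mpr ⟨substU U' q, Submodule.mem_inf.mpr ⟨?_, ?_⟩, hΦΦ' q⟩
      · exact substU_isHomogeneous U' m q hq1
      · refine (Submodule.mem_iInf _).mpr (fun i => ?_)
        have hmem : q ∈ vanishingSubmodule (U' (Pi.single i.succ 1)) (m - 1) := by
          have := (Submodule.mem_iInf _).mp hq2 i
          rwa [show U' (Pi.single i.succ 1) = Q i from hTQ' i]
        exact substU_mem_vanishing U' (Pi.single i.succ 1) (m - 1) q hmem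
  rw [← hmap, ← LinearEquiv.finrank_eq (e.submoduleMap (W0 m))]
  exact finrank_W0 m (by omega)
end

section
/- Let n ≥ 5 be a natural number, write n = 4q + r with q, r ∈ ℕ and 0 ≤ r ≤ 3, and suppose ⌈2^n/(n+1)⌉ is odd, say ⌈2^n/(n+1)⌉ = 2t* + 1 with t* ∈ ℕ. Then, as integers: (i) 2^{n−1} − 2(n−1)q − n(t* + 1 − 2q) − t* ≤ 0, and (ii) 2^{n−1} − 4q − n·t* − (t* + 1 − 2q) ≤ 0. -/
theorem stmt19 (n q r t : ℕ) (hn : 5 ≤ n) (hnqr : n = 4 * q + r) (hr : r ≤ 3)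
    (ht : ⌈(2 ^ n : ℚ) / (n + 1)⌉ = 2 * (t : ℤ) + 1) :
    (2 : ℤ) ^ (n - 1) - 2 * ((n : ℤ) - 1) * q - n * ((t : ℤ) + 1 - 2 * q) - t ≤ 0 ∧
    (2 : ℤ) ^ (n - 1) - 4 * (q : ℤ) - n * t - ((t : ℤ) + 1 - 2 * q) ≤ 0 := by
  have hn1 : (0:ℚ) < (n:ℚ) + 1 := by positivity
  have hle : (2^n : ℚ) / (n+1) ≤ ((2*t+1 : ℤ) : ℚ) := by
    rw [← ht]; exact Int.le_ceil _
  have hZ : (2^n : ℤ) ≤ (2*t+1) * (n+1) := by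
    have := (div_le_iff₀ hn1).mp hle
    exact_mod_cast this
  have hN : 2^n ≤ (2*t+1) * (n+1) := by exact_mod_cast hZ
  have hne : 2^n ≠ (2*t+1) * (n+1) := by
    intro h
    have hdvd : (2*t+1) ∣ 2^n := ⟨n+1, h⟩
    have hodd : Nat.Coprime (2*t+1) 2 := Nat.coprime_two_right.mpr ⟨t, by ring⟩
    have h1 : 2*t+1 = 1 := Nat.Coprime.eq_one_of_dvd (hodd.pow_right n) hdvd
    have ht0 : t = 0 := by omega
    subst ht0
    have h2 : n - 1 < 2^(n-1) := Nat.lt_two_pow_self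
    have hpow : 2^n = 2 * 2^(n-1) := by
      have h3 := pow_succ 2 (n-1)
      rw [Nat.sub_add_cancel (by omega : 1 ≤ n)] at h3
      omega
    omega
  have hlt : 2^n < (2*t+1) * (n+1) := lt_of_le_of_ne hN hne
  have key : (2:ℤ)^n + 1 ≤ (2*t+1) * (n+1) := by exact_mod_cast hlt
  have hpowZ : (2:ℤ)^n = 2 * 2^(n-1) := by
    have h3 := pow_succ (2:ℤ) (n-1)
    rw [Nat.sub_add_cancel (by omega : 1 ≤ n)] at h3
    linarith
  have hnZ : (n:ℤ) = 4*q + r := by exact_mod_cast hnqr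
  have hrZ : (r:ℤ) ≤ 3 := by exact_mod_cast hr
  have hr0 : (0:ℤ) ≤ r := Int.ofNat_nonneg r
  rw [hpowZ] at key
  constructor <;> nlinarith [key, hnZ, hrZ, hr0]
end
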